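/- arXiv:0810.4700 — 2 statements merged into one kernel-verified Lean document; each statement's English description precedes it below -/
import Mathlib

section
/- Fix d ≥ 1 and 0 < ε < 1/2. Let μ be a Borel probability measure on ℝ^d which is ε-radial, and let ν be a Borel probability measure on ℝ^d with d_TV(μ, ν) ≤ ε². Then ν is 5ε-radial. -/
open MeasureTheory ENNReal
open scoped RealInnerProductSpace

/-- The Monge–Kantorovich transportation cost between two measures, for cost function `c`:
the infimum of `∫ c(x,y) dγ` over all couplings `γ` of `μ` and `ν`. -/
noncomputable def Wcost {X : Type*} [MeasurableSpace X] (c : X → X → ℝ≥0∞)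
    (μ ν : Measure X) : ℝ≥0∞ :=
  ⨅ γ ∈ {γ : Measure (X × X) |
      Measure.map Prod.fst γ = μ ∧ Measure.map Prod.snd γ = ν},
    ∫⁻ p, c p.1 p.2 ∂γ

/-- The geodesic distance on the unit sphere `S^{d-1}`, `ρ(x,y) = arccos (x·y)`,
as an `ℝ≥0∞`-valued cost on `ℝ^d`. -/
noncomputable def geoCost {d : ℕ} (x y : EuclideanSpace ℝ (Fin d)) : ℝ≥0∞ :=
  ENNReal.ofReal (Real.arccos ⟪x, y⟫)

/-- The `L¹` Monge–Kantorovich distance with respect to the geodesic metric on `S^{d-1}`,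
for measures supported on the unit sphere of `ℝ^d`. -/
noncomputable def W1geo {d : ℕ} (μ ν : Measure (EuclideanSpace ℝ (Fin d))) : ℝ≥0∞ :=
  Wcost geoCost μ ν

/-- `σ` is the uniform (rotation-invariant) probability measure on the unit sphere
`S^{d-1} ⊂ ℝ^d`. -/
def IsUniformSphere {d : ℕ} (σ : Measure (EuclideanSpace ℝ (Fin d))) : Prop :=
  IsProbabilityMeasure σ ∧ σ (Metric.sphere (0 : EuclideanSpace ℝ (Fin d)) 1) = 1 ∧
    ∀ O : EuclideanSpace ℝ (Fin d) ≃ₗᵢ[ℝ] EuclideanSpace ℝ (Fin d),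
      Measure.map (fun x => O x) σ = σ

/-- The radial projection `R(x) = x/|x|`. -/
noncomputable def rproj {d : ℕ} (x : EuclideanSpace ℝ (Fin d)) : EuclideanSpace ℝ (Fin d) :=
  ‖x‖⁻¹ • x

/-- The spherical shell `S(J) = {x : |x| ∈ J}`. -/
def shell (d : ℕ) (J : Set ℝ) : Set (EuclideanSpace ℝ (Fin d)) := {x | ‖x‖ ∈ J}

/-- The conditioning `μ|_A` of a measure on a set. -/
noncomputable def condOn {α : Type*} [MeasurableSpace α] (μ : Measure α) (A : Set α) :
    Measure α := (μ A)⁻¹ • μ.restrict A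

/-- `μ` is ε-radial (with respect to the uniform measure `σ` on the sphere): for every
interval `J ⊂ (0,∞)` with `μ(S(J)) ≥ ε`, the radial projection of `μ|_{S(J)}` is within
transportation distance `ε` of `σ`. -/
def IsRadial {d : ℕ} (σ : Measure (EuclideanSpace ℝ (Fin d))) (ε : ℝ)
    (μ : Measure (EuclideanSpace ℝ (Fin d))) : Prop :=
  ∀ J : Set ℝ, J.OrdConnected → J ⊆ Set.Ioi 0 → ENNReal.ofReal ε ≤ μ (shell d J) →
    W1geo (Measure.map rproj (condOn μ (shell d J))) σ ≤ ENNReal.ofReal ε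

lemma key_coupling {X : Type*} [MeasurableSpace X] (c : X → X → ℝ≥0∞) (C : ℝ≥0∞)
    (hC : C ≠ ⊤) (hc : ∀ x y, c x y ≤ C)
    (α β σ lam : Measure X) [IsProbabilityMeasure α] [IsProbabilityMeasure β]
    [IsProbabilityMeasure σ] (hlα : lam ≤ α) (hlβ : lam ≤ β)
    (b : ℝ≥0∞) (hb : b ≠ ⊤) (hβcost : Wcost c β σ ≤ b) :
    Wcost c α σ ≤ b + C * (1 - lam Set.univ) := by
  haveI : IsFiniteMeasure lam := isFiniteMeasure_of_le α hlα
  set t : ℝ≥0∞ := 1 - lam Set.univ with ht_def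
  have ht_top : t ≠ ⊤ := (tsub_le_self.trans_lt one_lt_top).ne
  have htt : t⁻¹ * t ≤ 1 := by
    rcases eq_or_ne t 0 with h | h
    · simp [h]
    · rw [ENNReal.inv_mul_cancel h ht_top]
  apply ENNReal.le_of_forall_pos_le_add
  intro δ hδ hfin
  have h1 : Wcost c β σ < b + δ :=
    lt_of_le_of_lt hβcost (ENNReal.lt_add_right hb (by exact_mod_cast hδ.ne'))
  unfold Wcost at h1
  simp only [iInf_lt_iff] at h1
  obtain ⟨γ, hmem, hcost⟩ := h1
  obtain ⟨hγ1, hγ2⟩ := hmem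
  -- density of lam w.r.t. β, truncated at 1
  have hll : lam ≪ β := Measure.absolutelyContinuous_of_le hlβ
  have h0m : Measurable (lam.rnDeriv β) := Measure.measurable_rnDeriv _ _
  have h0le : lam.rnDeriv β ≤ᵐ[β] 1 := Measure.rnDeriv_le_one_of_le hlβ
  set h : X → ℝ≥0∞ := fun x => min (lam.rnDeriv β x) 1 with hh_def
  have hm : Measurable h := h0m.min measurable_const
  have hle1 : ∀ x, h x ≤ 1 := fun x => min_le_right _ _
  have hwd : β.withDensity h = lam := by
    rw [withDensity_congr_ae (μ := β) (f := h) (g := lam.rnDeriv β)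
      (by filter_upwards [h0le] with x hx; exact min_eq_left hx)]
    exact Measure.withDensity_rnDeriv_eq _ _ hll
  set γ₁ := γ.withDensity (fun p => h p.1) with hγ₁_def
  have hγ₁fst : Measure.map Prod.fst γ₁ = lam := by
    rw [← hwd]
    ext A hA
    rw [Measure.map_apply measurable_fst hA,
      withDensity_apply _ (measurable_fst hA), withDensity_apply _ hA, ← hγ1,
      setLIntegral_map hA hm measurable_fst]
  have hγ₁le : γ₁ ≤ γ := by
    refine Measure.le_iff.mpr fun A hA => ?_
    rw [withDensity_apply _ hA]
    calc ∫⁻ p in A, h p.1 ∂γ ≤ ∫⁻ _ in A, 1 ∂γ := lintegral_mono fun p => hle1 _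
    _ = γ A := by simp
  set σ₁ := Measure.map Prod.snd γ₁ with hσ₁_def
  have hσ₁le : σ₁ ≤ σ := hγ2 ▸ Measure.map_mono hγ₁le measurable_snd
  haveI : IsFiniteMeasure σ₁ := isFiniteMeasure_of_le σ hσ₁le
  have hσ₁univ : σ₁ Set.univ = lam Set.univ := by
    rw [hσ₁_def, Measure.map_apply measurable_snd MeasurableSet.univ, Set.preimage_univ,
      ← Set.preimage_univ (f := Prod.fst),
      ← Measure.map_apply measurable_fst MeasurableSet.univ, hγ₁fst]
  set α₂ := α - lam with hα₂_def
  set σ₂ := σ - σ₁ with hσ₂_def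
  haveI : IsFiniteMeasure α₂ := isFiniteMeasure_of_le α Measure.sub_le
  haveI : IsFiniteMeasure σ₂ := isFiniteMeasure_of_le σ Measure.sub_le
  have hα₂univ : α₂ Set.univ = t := by
    rw [hα₂_def, Measure.sub_apply MeasurableSet.univ hlα, measure_univ]
  have hσ₂univ : σ₂ Set.univ = t := by
    rw [hσ₂_def, Measure.sub_apply MeasurableSet.univ hσ₁le, measure_univ, hσ₁univ]
  have hαsum : α₂ + lam = α := Measure.sub_add_cancel_of_le hlα
  have hσsum : σ₂ + σ₁ = σ := Measure.sub_add_cancel_of_le hσ₁le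
  set γ' := γ₁ + t⁻¹ • (α₂.prod σ₂) with hγ'_def
  have hfst : Measure.map Prod.fst γ' = α := by
    rw [hγ'_def, Measure.map_add _ _ measurable_fst, Measure.map_smul,
      Measure.map_fst_prod, hγ₁fst, hσ₂univ, smul_smul]
    rcases eq_or_ne t 0 with h0 | h0
    · have : α₂ = 0 := by
        apply Measure.measure_univ_eq_zero.mp
        rw [hα₂univ, h0]
      rw [this] at hαsum ⊢
      simp only [smul_zero, add_zero]
      rw [← hαsum, zero_add]
    · rw [ENNReal.inv_mul_cancel h0 ht_top, one_smul, add_comm, hαsum]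
  have hsnd : Measure.map Prod.snd γ' = σ := by
    rw [hγ'_def, Measure.map_add _ _ measurable_snd, Measure.map_smul,
      Measure.map_snd_prod, hα₂univ, smul_smul]
    rcases eq_or_ne t 0 with h0 | h0
    · have : σ₂ = 0 := by
        apply Measure.measure_univ_eq_zero.mp
        rw [hσ₂univ, h0]
      rw [this] at hσsum ⊢
      simp only [smul_zero, add_zero]
      rw [← hσsum, zero_add]
    · rw [ENNReal.inv_mul_cancel h0 ht_top, one_smul, add_comm, hσsum]
  have hcost' : ∫⁻ p, c p.1 p.2 ∂γ' ≤ (∫⁻ p, c p.1 p.2 ∂γ) + C * t := by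
    rw [hγ'_def, lintegral_add_measure, lintegral_smul_measure]
    have hprod : ∫⁻ p, c p.1 p.2 ∂(α₂.prod σ₂) ≤ C * (t * t) := by
      calc ∫⁻ p, c p.1 p.2 ∂(α₂.prod σ₂) ≤ ∫⁻ _, C ∂(α₂.prod σ₂) :=
            lintegral_mono fun p => hc _ _
      _ = C * (α₂.prod σ₂) Set.univ := lintegral_const C
      _ = C * (t * t) := by
            rw [← Set.univ_prod_univ, Measure.prod_prod, hα₂univ, hσ₂univ]
    have h2 : t⁻¹ * ∫⁻ p, c p.1 p.2 ∂(α₂.prod σ₂) ≤ C * t := by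
      calc t⁻¹ * ∫⁻ p, c p.1 p.2 ∂(α₂.prod σ₂) ≤ t⁻¹ * (C * (t * t)) :=
            mul_le_mul_right hprod _
      _ = C * t * (t⁻¹ * t) := by ring
      _ ≤ C * t * 1 := mul_le_mul_right htt _
      _ = C * t := mul_one _
    exact add_le_add (lintegral_mono' hγ₁le le_rfl) h2
  have hWle : Wcost c α σ ≤ ∫⁻ p, c p.1 p.2 ∂γ' := by
    apply iInf₂_le γ' ⟨hfst, hsnd⟩
  calc Wcost c α σ ≤ (∫⁻ p, c p.1 p.2 ∂γ) + C * t := hWle.trans hcost'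
  _ ≤ (b + δ) + C * t := add_le_add hcost.le le_rfl
  _ = b + C * t + δ := by ring

lemma condOn_prob {α : Type*} [MeasurableSpace α] (μ : Measure α) [IsFiniteMeasure μ]
    {A : Set α} (h : μ A ≠ 0) : IsProbabilityMeasure (condOn μ A) :=
  ⟨by rw [condOn, Measure.smul_apply, Measure.restrict_apply_univ, smul_eq_mul,
      ENNReal.inv_mul_cancel h (measure_ne_top μ A)]⟩

lemma condOn_apply {α : Type*} [MeasurableSpace α] (μ : Measure α) (A : Set α)
    {B : Set α} (hB : MeasurableSet B) : condOn μ A B = (μ A)⁻¹ * μ (B ∩ A) := by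
  rw [condOn, Measure.smul_apply, Measure.restrict_apply hB, smul_eq_mul]

/-- If `μ` is ε-radial and `d_TV(μ,ν) ≤ ε²`, then `ν` is 5ε-radial. -/
theorem stmt5 {d : ℕ} (hd : 1 ≤ d) (ε : ℝ) (hε0 : 0 < ε) (hε : ε < 1/2)
    (σ : Measure (EuclideanSpace ℝ (Fin d))) (hσ : IsUniformSphere σ)
    (μ ν : Measure (EuclideanSpace ℝ (Fin d)))
    [IsProbabilityMeasure μ] [IsProbabilityMeasure ν]
    (hrad : IsRadial σ ε μ)
    (hTV : ∀ A : Set (EuclideanSpace ℝ (Fin d)), MeasurableSet A →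
      |(μ A).toReal - (ν A).toReal| ≤ ε ^ 2) :
    IsRadial σ (5 * ε) ν := by
  haveI hσP : IsProbabilityMeasure σ := hσ.1
  intro J hJc hJ0 hν5
  set S := shell d J with hS_def
  have hS : MeasurableSet S := hJc.measurableSet.preimage measurable_norm
  set a := (ν S).toReal with ha_def
  set b := (μ S).toReal with hb_def
  have ha5 : 5 * ε ≤ a := by
    rw [ha_def]
    exact (ENNReal.ofReal_le_iff_le_toReal (measure_ne_top ν S)).mp hν5
  have hab : |b - a| ≤ ε ^ 2 := hTV S hS
  have habs := abs_le.mp hab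
  have hb4 : 4 * ε ≤ b := by nlinarith
  have hb0 : (0:ℝ) < b := by linarith
  have ha0 : (0:ℝ) < a := by linarith
  have hμS0 : μ S ≠ 0 := by
    intro h
    rw [hb_def, h, ENNReal.toReal_zero] at hb0
    exact lt_irrefl _ hb0
  have hνS0 : ν S ≠ 0 := by
    intro h
    rw [ha_def, h, ENNReal.toReal_zero] at ha0
    exact lt_irrefl _ ha0
  have hrad' : W1geo (Measure.map rproj (condOn μ S)) σ ≤ ENNReal.ofReal ε := by
    apply hrad J hJc hJ0
    calc ENNReal.ofReal ε ≤ ENNReal.ofReal b := ENNReal.ofReal_le_ofReal (by linarith)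
    _ = μ S := ENNReal.ofReal_toReal (measure_ne_top μ S)
  set αc := condOn ν S with hαc_def
  set βc := condOn μ S with hβc_def
  haveI : IsProbabilityMeasure αc := condOn_prob ν hνS0
  haveI : IsProbabilityMeasure βc := condOn_prob μ hμS0
  set ρ := αc + βc with hρ_def
  have hαρ : αc ≪ ρ := Measure.absolutelyContinuous_of_le (Measure.le_add_right le_rfl)
  have hβρ : βc ≪ ρ := Measure.absolutelyContinuous_of_le (Measure.le_add_left le_rfl)
  set f := αc.rnDeriv ρ with hf_def
  set g := βc.rnDeriv ρ with hg_def
  have hf : Measurable f := Measure.measurable_rnDeriv _ _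
  have hg : Measurable g := Measure.measurable_rnDeriv _ _
  haveI : IsFiniteMeasure ρ := ⟨by
    rw [hρ_def, Measure.add_apply]
    exact ENNReal.add_lt_top.mpr ⟨measure_lt_top _ _, measure_lt_top _ _⟩⟩
  haveI := Measure.haveLebesgueDecomposition_of_sigmaFinite αc ρ
  haveI := Measure.haveLebesgueDecomposition_of_sigmaFinite βc ρ
  have hαw : ρ.withDensity f = αc := Measure.withDensity_rnDeriv_eq _ _ hαρ
  have hβw : ρ.withDensity g = βc := Measure.withDensity_rnDeriv_eq _ _ hβρ
  set lam0 := ρ.withDensity (fun x => min (f x) (g x)) with hlam0_def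
  have hlα : lam0 ≤ αc := by
    rw [hlam0_def, ← hαw]
    exact withDensity_mono (ae_of_all _ fun x => min_le_left _ _)
  have hlβ : lam0 ≤ βc := by
    rw [hlam0_def, ← hβw]
    exact withDensity_mono (ae_of_all _ fun x => min_le_right _ _)
  -- mass of the overlap
  set E := {x : EuclideanSpace ℝ (Fin d) | g x < f x} with hE_def
  have hE : MeasurableSet E := measurableSet_lt hg hf
  have hfint : ∫⁻ x, f x ∂ρ = 1 := by
    have : ρ.withDensity f Set.univ = αc Set.univ := by rw [hαw]
    rwa [withDensity_apply _ MeasurableSet.univ, Measure.restrict_univ, measure_univ] at this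
  have hminle : ∀ x, min (f x) (g x) ≤ f x := fun x => min_le_left _ _
  have hminfin : ∫⁻ x, min (f x) (g x) ∂ρ ≠ ⊤ := by
    refine ne_top_of_le_ne_top ?_ (lintegral_mono hminle)
    rw [hfint]; exact one_ne_top
  have hmass0 : 1 - lam0 Set.univ = αc E - βc E := by
    have hlamuniv : lam0 Set.univ = ∫⁻ x, min (f x) (g x) ∂ρ := by
      rw [hlam0_def, withDensity_apply _ MeasurableSet.univ, Measure.restrict_univ]
    have hsub1 : ∫⁻ x, (f x - min (f x) (g x)) ∂ρ
        = (∫⁻ x, f x ∂ρ) - ∫⁻ x, min (f x) (g x) ∂ρ :=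
      lintegral_sub (hf.min hg) hminfin (ae_of_all _ hminle)
    have hptwise : ∀ x, f x - min (f x) (g x) = E.indicator (fun x => f x - g x) x := by
      intro x
      by_cases h : x ∈ E
      · have hx : g x < f x := h
        rw [Set.indicator_of_mem h, min_eq_right hx.le]
      · have hx : f x ≤ g x := le_of_not_gt h
        rw [Set.indicator_of_notMem h, min_eq_left hx, tsub_self]
    have hsub2 : ∫⁻ x, (f x - min (f x) (g x)) ∂ρ = ∫⁻ x in E, (f x - g x) ∂ρ := by
      rw [lintegral_congr hptwise, lintegral_indicator hE]
    have hgE_fin : ∫⁻ x in E, g x ∂ρ ≠ ⊤ := by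
      have : ∫⁻ x in E, g x ∂ρ = βc E := by rw [← hβw, withDensity_apply _ hE]
      rw [this]; exact measure_ne_top _ _
    have hsub3 : ∫⁻ x in E, (f x - g x) ∂ρ = (∫⁻ x in E, f x ∂ρ) - ∫⁻ x in E, g x ∂ρ := by
      refine lintegral_sub hg hgE_fin ?_
      filter_upwards [ae_restrict_mem hE] with x hx
      exact (le_of_lt hx)
    have hfE : ∫⁻ x in E, f x ∂ρ = αc E := by rw [← hαw, withDensity_apply _ hE]
    have hgE : ∫⁻ x in E, g x ∂ρ = βc E := by rw [← hβw, withDensity_apply _ hE]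
    rw [hlamuniv, ← hfint, ← hsub1, hsub2, hsub3, hfE, hgE]
  have hmass : 1 - lam0 Set.univ ≤ ENNReal.ofReal (ε / 2) := by
    rw [hmass0]
    have hES : MeasurableSet (E ∩ S) := hE.inter hS
    set A := (ν (E ∩ S)).toReal with hA_def
    set B := (μ (E ∩ S)).toReal with hB_def
    have hABs := abs_le.mp (hTV (E ∩ S) hES)
    have hA0 : 0 ≤ A := ENNReal.toReal_nonneg
    have hB0 : 0 ≤ B := ENNReal.toReal_nonneg
    have hAa : A ≤ a := ENNReal.toReal_mono (measure_ne_top ν S)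
      (measure_mono (Set.inter_subset_right))
    have hαE : αc E = ENNReal.ofReal (A / a) := by
      rw [hαc_def, condOn_apply _ _ hE, ← ENNReal.ofReal_toReal (measure_ne_top ν (E ∩ S)),
        ← hA_def, ← ENNReal.ofReal_toReal (a := ν S) (measure_ne_top ν S), ← ha_def,
        ← ENNReal.ofReal_inv_of_pos ha0, ← ENNReal.ofReal_mul (by positivity),
        div_eq_inv_mul]
    have hβE : βc E = ENNReal.ofReal (B / b) := by
      rw [hβc_def, condOn_apply _ _ hE, ← ENNReal.ofReal_toReal (measure_ne_top μ (E ∩ S)),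
        ← hB_def, ← ENNReal.ofReal_toReal (a := μ S) (measure_ne_top μ S), ← hb_def,
        ← ENNReal.ofReal_inv_of_pos hb0, ← ENNReal.ofReal_mul (by positivity),
        div_eq_inv_mul]
    have hreal : A / a ≤ ε / 2 + B / b := by
      have hABs' : -ε ^ 2 ≤ B - A ∧ B - A ≤ ε ^ 2 := hABs
      have hkey : A * b - a * B ≤ (ε / 2) * (a * b) := by
        have e1 : A * (b - a) ≤ A * ε ^ 2 := mul_le_mul_of_nonneg_left habs.2 hA0
        have e2 : A * ε ^ 2 ≤ a * ε ^ 2 := mul_le_mul_of_nonneg_right hAa (sq_nonneg ε)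
        have e3 : a * (A - B) ≤ a * ε ^ 2 :=
          mul_le_mul_of_nonneg_left (by linarith [hABs'.1]) ha0.le
        have e4 : (ε / 2 * a) * (4 * ε) ≤ (ε / 2 * a) * b :=
          mul_le_mul_of_nonneg_left hb4 (by positivity)
        nlinarith [e1, e2, e3, e4]
      have h1 : A / a - B / b = (A * b - a * B) / (a * b) := div_sub_div _ _ ha0.ne' hb0.ne'
      have h2 : (A * b - a * B) / (a * b) ≤ ε / 2 :=
        (div_le_iff₀ (by positivity)).mpr hkey
      linarith [h1 ▸ h2]
    rw [hαE, hβE]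
    calc ENNReal.ofReal (A / a) - ENNReal.ofReal (B / b)
        ≤ ENNReal.ofReal (ε / 2 + B / b) - ENNReal.ofReal (B / b) := by
          exact tsub_le_tsub_right (ENNReal.ofReal_le_ofReal hreal) _
    _ = ENNReal.ofReal (ε / 2) + ENNReal.ofReal (B / b) - ENNReal.ofReal (B / b) := by
          rw [ENNReal.ofReal_add (by linarith) (by positivity)]
    _ ≤ ENNReal.ofReal (ε / 2) := by
          rw [ENNReal.add_sub_cancel_right ENNReal.ofReal_ne_top]
  -- push everything to the sphere
  have hrm : Measurable (rproj (d := d)) := by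
    have : Measurable fun x : EuclideanSpace ℝ (Fin d) => ‖x‖⁻¹ := measurable_norm.inv
    exact this.smul measurable_id
  haveI : IsProbabilityMeasure (Measure.map rproj αc) :=
    Measure.isProbabilityMeasure_map hrm.aemeasurable
  haveI : IsProbabilityMeasure (Measure.map rproj βc) :=
    Measure.isProbabilityMeasure_map hrm.aemeasurable
  have hlα' : Measure.map rproj lam0 ≤ Measure.map rproj αc := Measure.map_mono hlα hrm
  have hlβ' : Measure.map rproj lam0 ≤ Measure.map rproj βc := Measure.map_mono hlβ hrm
  have hlamuniv' : Measure.map rproj lam0 Set.univ = lam0 Set.univ := by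
    rw [Measure.map_apply hrm MeasurableSet.univ, Set.preimage_univ]
  have harccos : ∀ x y : EuclideanSpace ℝ (Fin d), geoCost x y ≤ ENNReal.ofReal Real.pi :=
    fun x y => ENNReal.ofReal_le_ofReal (Real.arccos_le_pi _)
  have hkey := key_coupling geoCost (ENNReal.ofReal Real.pi) ENNReal.ofReal_ne_top harccos
    (Measure.map rproj αc) (Measure.map rproj βc) σ (Measure.map rproj lam0)
    hlα' hlβ' (ENNReal.ofReal ε) ENNReal.ofReal_ne_top hrad'
  have hπ4 : Real.pi ≤ 4 := Real.pi_le_four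
  calc W1geo (Measure.map rproj (condOn ν S)) σ
      ≤ ENNReal.ofReal ε + ENNReal.ofReal Real.pi * (1 - Measure.map rproj lam0 Set.univ) :=
        hkey
  _ ≤ ENNReal.ofReal ε + ENNReal.ofReal Real.pi * ENNReal.ofReal (ε / 2) := by
        rw [hlamuniv']
        exact add_le_add le_rfl (mul_le_mul_right hmass _)
  _ = ENNReal.ofReal (ε + Real.pi * (ε / 2)) := by
        rw [← ENNReal.ofReal_mul Real.pi_pos.le,
          ← ENNReal.ofReal_add hε0.le (by positivity)]
  _ ≤ ENNReal.ofReal (5 * ε) := ENNReal.ofReal_le_ofReal (by nlinarith)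
end

section
/- Fix d ≥ 1 and 0 < ε < 1/2. Let λ be a probability measure on a measurable space Ω and let α ↦ μ_α be a measurable family of Borel probability measures on ℝ^d such that each μ_α is ε-radial. Then the mixture μ = ∫_Ω μ_α dλ(α) is 4√ε-radial. -/
open MeasureTheory ENNReal
open scoped RealInnerProductSpace

section Geo
variable {E : Type*} [NormedAddCommGroup E] [InnerProductSpace ℝ E]

lemma my_abs_inner_le_one {x y : E} (hx : ‖x‖ = 1) (hy : ‖y‖ = 1) : |⟪x, y⟫| ≤ 1 := by
  have := abs_real_inner_le_norm x y
  simpa [hx, hy] using this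

lemma my_arccos_antitone : Antitone Real.arccos := by
  intro a b h
  simp only [Real.arccos_eq_pi_div_two_sub_arcsin]
  exact sub_le_sub_left (Real.monotone_arcsin h) _

lemma my_arccos_triangle {x y z : E} (hx : ‖x‖ = 1) (hy : ‖y‖ = 1) (hz : ‖z‖ = 1) :
    Real.arccos ⟪x, z⟫ ≤ Real.arccos ⟪x, y⟫ + Real.arccos ⟪y, z⟫ := by
  set a := ⟪x, y⟫ with ha'
  set b := ⟪y, z⟫ with hb'
  have ha : |a| ≤ 1 := my_abs_inner_le_one hx hy
  have hb : |b| ≤ 1 := my_abs_inner_le_one hy hz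
  have hxz : |⟪x, z⟫| ≤ 1 := my_abs_inner_le_one hx hz
  have hyy : ⟪y, y⟫ = 1 := by
    rw [real_inner_self_eq_norm_sq, hy]; norm_num
  set u := x - a • y with hu'
  set v := z - b • y with hv'
  have huv : ⟪x, z⟫ = a * b + ⟪u, v⟫ := by
    have h1 : ⟪y, z⟫ = b := rfl
    have h2 : ⟪y, x⟫ = a := (real_inner_comm y x).symm
    have h3 : ⟪x, y⟫ = a := rfl
    simp only [hu', hv', inner_sub_left, inner_sub_right, real_inner_smul_left,
      real_inner_smul_right, hyy, h1, h2, h3]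
    ring
  have hnu : ‖u‖ ^ 2 = 1 - a ^ 2 := by
    have h3 : ⟪x, y⟫ = a := rfl
    rw [hu', norm_sub_sq_real, real_inner_smul_right, norm_smul, hx, hy, h3]
    simp [Real.norm_eq_abs]
    nlinarith [sq_abs a]
  have hnv : ‖v‖ ^ 2 = 1 - b ^ 2 := by
    have h3 : ⟪z, y⟫ = b := (real_inner_comm z y).symm
    rw [hv', norm_sub_sq_real, real_inner_smul_right, norm_smul, hz, hy, h3]
    simp [Real.norm_eq_abs]
    nlinarith [sq_abs b]
  have hnu' : ‖u‖ = Real.sqrt (1 - a ^ 2) := by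
    rw [← hnu]; exact (Real.sqrt_sq (norm_nonneg _)).symm
  have hnv' : ‖v‖ = Real.sqrt (1 - b ^ 2) := by
    rw [← hnv]; exact (Real.sqrt_sq (norm_nonneg _)).symm
  have key : a * b - Real.sqrt (1 - a ^ 2) * Real.sqrt (1 - b ^ 2) ≤ ⟪x, z⟫ := by
    rw [huv, ← hnu', ← hnv']
    have : -(‖u‖ * ‖v‖) ≤ ⟪u, v⟫ := neg_abs_le _ |>.trans' (by
      have := abs_real_inner_le_norm u v
      linarith [neg_le_neg this])
    linarith
  by_cases hab : Real.arccos a + Real.arccos b ≤ Real.pi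
  · have hcos : Real.cos (Real.arccos a + Real.arccos b)
        = a * b - Real.sqrt (1 - a ^ 2) * Real.sqrt (1 - b ^ 2) := by
      rw [Real.cos_add, Real.cos_arccos (neg_le_of_abs_le ha) (le_of_abs_le ha),
        Real.cos_arccos (neg_le_of_abs_le hb) (le_of_abs_le hb),
        Real.sin_arccos, Real.sin_arccos]
    calc Real.arccos ⟪x, z⟫ ≤ Real.arccos (Real.cos (Real.arccos a + Real.arccos b)) := by
          exact my_arccos_antitone (hcos ▸ key)
      _ = Real.arccos a + Real.arccos b := Real.arccos_cos
          (add_nonneg (Real.arccos_nonneg _) (Real.arccos_nonneg _)) hab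
  · push_neg at hab
    exact (Real.arccos_le_pi _).trans hab.le

lemma my_arccos_le_norm {x y : E} (hx : ‖x‖ = 1) (hy : ‖y‖ = 1) :
    Real.arccos ⟪x, y⟫ ≤ Real.pi / 2 * ‖x - y‖ := by
  have hxy : |⟪x, y⟫| ≤ 1 := my_abs_inner_le_one hx hy
  have hns : ‖x - y‖ ^ 2 = 2 - 2 * ⟪x, y⟫ := by
    rw [norm_sub_sq_real, hx, hy]; ring
  set θ := Real.arccos ⟪x, y⟫ with hθ'
  have hθ0 : 0 ≤ θ := Real.arccos_nonneg _
  have hθπ : θ ≤ Real.pi := Real.arccos_le_pi _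
  have hcos : Real.cos θ = ⟪x, y⟫ :=
    Real.cos_arccos (neg_le_of_abs_le hxy) (le_of_abs_le hxy)
  -- sin (θ/2) = ‖x - y‖ / 2
  have hsin2 : Real.sin (θ / 2) ^ 2 = (‖x - y‖ / 2) ^ 2 := by
    rw [Real.sin_sq_eq_half_sub]
    rw [show 2 * (θ / 2) = θ by ring, hcos]
    rw [div_pow, hns]; ring
  have hsin : Real.sin (θ / 2) = ‖x - y‖ / 2 := by
    have h1 : 0 ≤ Real.sin (θ / 2) := Real.sin_nonneg_of_nonneg_of_le_pi (by linarith) (by linarith)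
    have h2 : 0 ≤ ‖x - y‖ / 2 := by positivity
    nlinarith [hsin2]
  have hj : 2 / Real.pi * (θ / 2) ≤ Real.sin (θ / 2) :=
    Real.mul_le_sin (by linarith) (by linarith)
  have hπ : 0 < Real.pi := Real.pi_pos
  rw [hsin] at hj
  rw [div_mul_eq_mul_div, mul_comm] at hj
  calc θ = Real.pi * (2 / Real.pi * (θ / 2)) := by field_simp
    _ ≤ Real.pi * (‖x - y‖ / 2) := by
        apply mul_le_mul_of_nonneg_left _ hπ.le
        calc 2 / Real.pi * (θ / 2) ≤ Real.sin (θ/2) := Real.mul_le_sin (by linarith) (by linarith)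
          _ = ‖x - y‖ / 2 := hsin
    _ = Real.pi / 2 * ‖x - y‖ := by ring

end Geo

section AuxDecl
variable {d : ℕ}
local notation "X" => EuclideanSpace ℝ (Fin d)
local notation "Sph" => Metric.sphere (0 : EuclideanSpace ℝ (Fin d)) 1

lemma sphere_partition (hd : 1 ≤ d) {ε : ℝ} (hε : 0 < ε) :
    ∃ (N : ℕ) (P : Fin N → Set (EuclideanSpace ℝ (Fin d)))
      (ctr : Fin N → EuclideanSpace ℝ (Fin d)),
      0 < N ∧ (∀ i, MeasurableSet (P i)) ∧ (∀ i, P i ⊆ Sph) ∧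
      (∀ i j, i ≠ j → Disjoint (P i) (P j)) ∧ (Sph ⊆ ⋃ i, P i) ∧
      (∀ i, ‖ctr i‖ = 1) ∧ (∀ i, ∀ y ∈ P i, Real.arccos ⟪ctr i, y⟫ ≤ ε) := by
  have hc : IsCompact Sph := isCompact_sphere 0 1
  have hcov : Sph ⊆ ⋃ x : Sph, Metric.ball (x : EuclideanSpace ℝ (Fin d)) (ε/2) := by
    intro y hy
    exact Set.mem_iUnion.2 ⟨⟨y, hy⟩, Metric.mem_ball_self (by linarith)⟩
  obtain ⟨t, ht⟩ := hc.elim_finite_subcover _ (fun x : Sph => Metric.isOpen_ball) hcov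
  set N := t.card with hN
  set e := t.equivFin with he
  set ctr : Fin N → EuclideanSpace ℝ (Fin d) := fun i => ((e.symm i : t) : Sph) with hctr
  have hctr1 : ∀ i, ‖ctr i‖ = 1 := by
    intro i
    have := ((e.symm i : t) : Sph).2
    rwa [mem_sphere_zero_iff_norm] at this
  set P : Fin N → Set (EuclideanSpace ℝ (Fin d)) := fun i =>
    ((Metric.ball (ctr i) (ε/2) ∩ Sph) \ ⋃ j : {j : Fin N // j < i}, Metric.ball (ctr j) (ε/2))
    with hP
  have hmeas : ∀ i, MeasurableSet (P i) := by
    intro i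
    apply MeasurableSet.diff
    · exact (Metric.isOpen_ball.measurableSet).inter (Metric.isClosed_sphere.measurableSet)
    · exact MeasurableSet.iUnion fun j => Metric.isOpen_ball.measurableSet
  have hsub : ∀ i, P i ⊆ Sph := fun i x hx => hx.1.2
  have hdisj : ∀ i j, i ≠ j → Disjoint (P i) (P j) := by
    intro i j hij
    rcases hij.lt_or_gt with h | h
    · rw [Set.disjoint_left]
      intro x hxi hxj
      exact hxj.2 (Set.mem_iUnion.2 ⟨⟨i, h⟩, hxi.1.1⟩)
    · rw [Set.disjoint_left]
      intro x hxi hxj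
      exact hxi.2 (Set.mem_iUnion.2 ⟨⟨j, h⟩, hxj.1.1⟩)
  have hcover : Sph ⊆ ⋃ i, P i := by
    intro y hy
    have : ∃ i : Fin N, y ∈ Metric.ball (ctr i) (ε/2) := by
      obtain ⟨x, hxt, hyx⟩ := Set.mem_iUnion₂.1 (ht hy)
      exact ⟨e ⟨x, hxt⟩, by simpa [hctr] using hyx⟩
    classical
    obtain ⟨i, hi, hmin⟩ := Finset.exists_min_image (Finset.univ.filter
      (fun i => y ∈ Metric.ball (ctr i) (ε/2))) id (by
        obtain ⟨i, hi⟩ := this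
        exact ⟨i, Finset.mem_filter.2 ⟨Finset.mem_univ _, hi⟩⟩)
    refine Set.mem_iUnion.2 ⟨i, ⟨⟨(Finset.mem_filter.1 hi).2, hy⟩, ?_⟩⟩
    intro hmem
    obtain ⟨⟨j, hji⟩, hj⟩ := Set.mem_iUnion.1 hmem
    have : i ≤ j := hmin j (Finset.mem_filter.2 ⟨Finset.mem_univ _, hj⟩)
    exact absurd hji (not_lt.2 this)
  have hN0 : 0 < N := by
    by_contra h
    push_neg at h
    have hsphne : (Sph : Set (EuclideanSpace ℝ (Fin d))).Nonempty := by
      refine ⟨EuclideanSpace.single ⟨0, hd⟩ 1, ?_⟩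
      rw [mem_sphere_zero_iff_norm, EuclideanSpace.norm_single]
      norm_num
    obtain ⟨y, hy⟩ := hsphne
    obtain ⟨i, _⟩ := Set.mem_iUnion.1 (hcover hy)
    exact absurd i.2 (by omega)
  refine ⟨N, P, ctr, hN0, hmeas, hsub, hdisj, hcover, hctr1, ?_⟩
  intro i y hy
  have hy1 : ‖y‖ = 1 := mem_sphere_zero_iff_norm.1 (hsub i hy)
  have hdist : ‖ctr i - y‖ < ε/2 := by
    have := hy.1.1
    rw [Metric.mem_ball, dist_eq_norm] at this
    rwa [norm_sub_rev]
  calc Real.arccos ⟪ctr i, y⟫ ≤ Real.pi / 2 * ‖ctr i - y‖ := my_arccos_le_norm (hctr1 i) hy1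
    _ ≤ Real.pi / 2 * (ε/2) := by
        apply mul_le_mul_of_nonneg_left hdist.le (by positivity)
    _ ≤ ε := by nlinarith [Real.pi_le_four]

lemma geoCost_le_pi (x y : EuclideanSpace ℝ (Fin d)) : geoCost x y ≤ ENNReal.ofReal Real.pi :=
  ENNReal.ofReal_le_ofReal (Real.arccos_le_pi _)

lemma geoCost_triangle {x y z : X} (hx : ‖x‖ = 1) (hy : ‖y‖ = 1) (hz : ‖z‖ = 1) :
    geoCost x z ≤ geoCost x y + geoCost y z := by
  unfold geoCost
  rw [← ENNReal.ofReal_add (Real.arccos_nonneg _) (Real.arccos_nonneg _)]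
  exact ENNReal.ofReal_le_ofReal (my_arccos_triangle hx hy hz)

lemma geoCost_comm (x y : X) : geoCost x y = geoCost y x := by
  unfold geoCost; rw [real_inner_comm]

lemma measurable_geoCost : Measurable (fun p : EuclideanSpace ℝ (Fin d) × EuclideanSpace ℝ (Fin d)
    => geoCost p.1 p.2) := by
  apply ENNReal.measurable_ofReal.comp
  exact (Real.continuous_arccos.comp continuous_inner).measurable

lemma wcost_le_cost (c : X → X → ℝ≥0∞) {μ ν : Measure X} {γ : Measure (X × X)}
    (h1 : Measure.map Prod.fst γ = μ) (h2 : Measure.map Prod.snd γ = ν) :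
    Wcost c μ ν ≤ ∫⁻ p, c p.1 p.2 ∂γ :=
  iInf₂_le γ ⟨h1, h2⟩

lemma exists_coupling_of_lt (c : X → X → ℝ≥0∞) {μ ν : Measure X} {t : ℝ≥0∞}
    (h : Wcost c μ ν < t) :
    ∃ γ : Measure (X × X), Measure.map Prod.fst γ = μ ∧ Measure.map Prod.snd γ = ν ∧
      ∫⁻ p, c p.1 p.2 ∂γ < t := by
  rw [Wcost] at h
  simp only [iInf_lt_iff] at h
  obtain ⟨γ, hγ, hc⟩ := h
  exact ⟨γ, hγ.1, hγ.2, hc⟩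

lemma my_map_smul {A B : Type*} [MeasurableSpace A] [MeasurableSpace B]
    (a : ℝ≥0∞) (ρ : MeasureTheory.Measure A) {f : A → B} (hf : Measurable f) :
    MeasureTheory.Measure.map f (a • ρ) = a • MeasureTheory.Measure.map f ρ := by
  apply MeasureTheory.Measure.ext
  intro E hE
  rw [MeasureTheory.Measure.map_apply hf hE, MeasureTheory.Measure.smul_apply,
    MeasureTheory.Measure.smul_apply, smul_eq_mul, smul_eq_mul,
    MeasureTheory.Measure.map_apply hf hE]

lemma enn_inv_mul_le_one (a : ℝ≥0∞) : a⁻¹ * a ≤ 1 := by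
  rcases eq_or_ne a 0 with rfl | h0
  · simp
  rcases eq_or_ne a ⊤ with rfl | ht
  · simp
  rw [ENNReal.inv_mul_cancel h0 ht]

lemma enn_mul_inv_le_one (a : ℝ≥0∞) : a * a⁻¹ ≤ 1 := by
  rw [mul_comm]; exact enn_inv_mul_le_one a

set_option maxHeartbeats 1600000 in
/-- The key mixture-coupling construction. -/
lemma mixture_coupling (hd : 1 ≤ d) {ε : ℝ} (hε0 : 0 < ε)
    (σ : Measure X) (hσp : IsProbabilityMeasure σ) (hσs : σ Sph = 1)
    {Ω : Type*} [MeasurableSpace Ω] (lam : Measure Ω) [IsProbabilityMeasure lam]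
    (w : Ω → ℝ≥0∞) (hw : Measurable w) (hw1 : ∀ α, w α ≤ 1)
    (nb : Ω → Measure X) (hnbm : Measurable nb)
    (hnb1 : ∀ α, w α ≠ 0 → IsProbabilityMeasure (nb α))
    (hnbs : ∀ α, nb α (Sphᶜ) = 0)
    (hnbrad : ∀ α, ENNReal.ofReal ε ≤ w α → Wcost geoCost (nb α) σ ≤ ENNReal.ofReal ε) :
    ∃ γ : Measure (X × X),
      Measure.map Prod.fst γ = lam.bind (fun α => w α • nb α) ∧
      Measure.map Prod.snd γ = (∫⁻ α, w α ∂lam) • σ ∧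
      ∫⁻ p, geoCost p.1 p.2 ∂γ ≤ ENNReal.ofReal ((4 + 2 * Real.pi) * ε) := by
  classical
  obtain ⟨N, P, ctr, hN0, hPmeas, hPsub, hPdisj, hPcov, hctr1, hPrad⟩ :=
    sphere_partition hd hε0
  -- the measurable kernel α ↦ w α • nb α
  have hnbev : ∀ ⦃s : Set X⦄, MeasurableSet s → Measurable (fun α => nb α s) :=
    fun s hs => (Measure.measurable_coe hs).comp hnbm
  set ρker : Ω → Measure X := fun α => w α • nb α with hρker
  have hρm : Measurable ρker := Measure.measurable_measure.2 fun s hs => by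
    simp only [hρker, Measure.smul_apply, smul_eq_mul]
    exact hw.mul (hnbev hs)
  -- good set
  set G : Set Ω := {α | ENNReal.ofReal ε ≤ w α} with hG
  have hGmeas : MeasurableSet G := measurableSet_le measurable_const hw
  have hGw0 : ∀ α ∈ G, w α ≠ 0 := fun α hα =>
    (lt_of_lt_of_le (ENNReal.ofReal_pos.2 hε0) hα).ne'
  -- piece masses
  set p' : Ω → Fin N → ℝ≥0∞ := fun α i => nb α (P i) with hp'
  have hp'meas : ∀ i, Measurable (fun α => p' α i) := fun i => hnbev (hPmeas i)
  have hnbuniv : ∀ α, w α ≠ 0 → nb α Set.univ = 1 := fun α hα => (hnb1 α hα).measure_univ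
  have hp'le : ∀ α, w α ≠ 0 → ∀ i, p' α i ≤ 1 := fun α hα i => by
    haveI := hnb1 α hα
    exact prob_le_one
  have hsumU : ∀ α, ∑ i, p' α i = nb α (⋃ i, P i) := fun α => by
    rw [measure_iUnion (fun i j hij => hPdisj i j hij) hPmeas, tsum_fintype]
  have hnbsph : ∀ α, w α ≠ 0 → nb α (Metric.sphere 0 1) = 1 := fun α hα => by
    have := measure_add_measure_compl (μ := nb α) (s := Metric.sphere (0 : EuclideanSpace ℝ (Fin d)) 1) (Metric.isClosed_sphere.measurableSet)
    rw [hnbs α, add_zero, hnbuniv α hα] at this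
    exact this
  have hsum1 : ∀ α ∈ G, ∑ i, p' α i = 1 := fun α hα => by
    have hw0 := hGw0 α hα
    rw [hsumU α]
    refine le_antisymm ?_ ?_
    · rw [← hnbuniv α hw0]; exact measure_mono (Set.subset_univ _)
    · rw [← hnbsph α hw0]; exact measure_mono hPcov
  -- grid cells
  set h : ℝ := ε / N with hh
  have hhpos : 0 < h := div_pos hε0 (Nat.cast_pos.2 hN0)
  set M : ℕ := ⌈1 / h⌉₊ with hM
  set egrid : Ω → Fin N → Fin (M + 1) := fun α i =>
    ⟨min (⌊(p' α i).toReal / h⌋₊) M, by omega⟩ with hegrid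
  set A : (Fin N → Fin (M + 1)) → Set Ω := fun k => G ∩ {α | egrid α = k} with hA
  have hegmeas : ∀ i, Measurable (fun α => egrid α i) := by
    intro i
    have hm : Measurable (fun α => min (⌊(p' α i).toReal / h⌋₊) M) :=
      ((hp'meas i).ennreal_toReal.div_const h).nat_floor.min measurable_const
    apply measurable_to_countable'
    intro y
    have : (fun α => egrid α i) ⁻¹' {y}
        = (fun α => min (⌊(p' α i).toReal / h⌋₊) M) ⁻¹' {(y : ℕ)} := by
      ext α
      simp [hegrid, Fin.ext_iff]
    rw [this]
    exact hm (measurableSet_singleton _)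
  have hAmeas : ∀ k, MeasurableSet (A k) := by
    intro k
    apply hGmeas.inter
    have : {α | egrid α = k} = ⋂ i, {α | egrid α i = k i} := by
      ext α; simp [funext_iff]
    rw [this]
    exact MeasurableSet.iInter fun i => (hegmeas i) (measurableSet_singleton (k i))
  have hAdisj : ∀ k l, k ≠ l → Disjoint (A k) (A l) := by
    intro k l hkl
    rw [Set.disjoint_left]
    rintro α ⟨-, hαk⟩ ⟨-, hαl⟩
    exact hkl (hαk.symm.trans hαl)
  have hAcov : G = ⋃ k, A k := by
    ext α
    constructor
    · intro hα; exact Set.mem_iUnion.2 ⟨egrid α, hα, rfl⟩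
    · rintro hα
      obtain ⟨k, hk, -⟩ := Set.mem_iUnion.1 hα
      exact hk
  -- cell diameter bound
  have hMge : 1 ≤ (M : ℝ) * h := by
    rw [hM]
    calc (1 : ℝ) = (1 / h) * h := by field_simp
      _ ≤ (⌈1 / h⌉₊ : ℝ) * h := by
          apply mul_le_mul_of_nonneg_right (Nat.le_ceil _) hhpos.le
  have hcellR : ∀ a b : ℝ, 0 ≤ a → a ≤ 1 → 0 ≤ b → b ≤ 1 →
      min ⌊a / h⌋₊ M = min ⌊b / h⌋₊ M → a ≤ b + h := by
    intro a b ha0 ha1 hb0 hb1 hfl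
    rcases lt_or_ge (⌊a / h⌋₊) M with hlt | hge
    · have h1 : min ⌊a / h⌋₊ M = ⌊a / h⌋₊ := min_eq_left hlt.le
      have h2 : ⌊b / h⌋₊ = ⌊a / h⌋₊ := by
        rcases lt_or_ge (⌊b / h⌋₊) M with hbl | hbg
        · rw [h1, min_eq_left hbl.le] at hfl; omega
        · rw [h1, min_eq_right hbg] at hfl; omega
      -- a/h < ⌊a/h⌋ + 1 = ⌊b/h⌋ + 1 ≤ b/h + 1
      have ha' : a / h < (⌊a / h⌋₊ : ℝ) + 1 := Nat.lt_floor_add_one _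
      have hb' : (⌊b / h⌋₊ : ℝ) ≤ b / h := Nat.floor_le (by positivity)
      rw [h2] at hb'
      have := ha'.le.trans (by linarith : (⌊a / h⌋₊ : ℝ) + 1 ≤ b / h + 1)
      calc a = (a / h) * h := by field_simp
        _ ≤ (b / h + 1) * h := mul_le_mul_of_nonneg_right this hhpos.le
        _ = b + h := by field_simp
    · -- a ≥ M * h ≥ 1, so a = 1 ≤ b + h? no: b ≥ M*h ≥ 1 too, so a ≤ 1 ≤ b ≤ b + h
      have hmin : min ⌊b / h⌋₊ M = M := by
        rw [← hfl, min_eq_right hge]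
      have hbge : M ≤ ⌊b / h⌋₊ := by
        rcases le_or_gt M (⌊b / h⌋₊) with h' | h'
        · exact h'
        · rw [min_eq_left h'.le] at hmin; omega
      have : (M : ℝ) ≤ b / h := le_trans (Nat.cast_le.2 hbge) (Nat.floor_le (by positivity))
      have hbig : 1 ≤ b := by
        calc (1 : ℝ) ≤ (M : ℝ) * h := hMge
          _ ≤ (b / h) * h := mul_le_mul_of_nonneg_right this hhpos.le
          _ = b := by field_simp
      linarith
  have hcell : ∀ k, ∀ α ∈ A k, ∀ β ∈ A k, ∀ i,
      p' α i ≤ min (p' α i) (p' β i) + ENNReal.ofReal h := by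
    intro k α hα β hβ i
    have hαG : α ∈ G := hα.1
    have hβG : β ∈ G := hβ.1
    have hαne : p' α i ≠ ⊤ := (hp'le α (hGw0 α hαG) i).trans_lt one_lt_top |>.ne
    have hβne : p' β i ≠ ⊤ := (hp'le β (hGw0 β hβG) i).trans_lt one_lt_top |>.ne
    rcases le_total (p' α i) (p' β i) with hle | hle
    · rw [min_eq_left hle]; exact le_self_add
    · rw [min_eq_right hle]
      have heg : egrid α i = egrid β i := by rw [hα.2, hβ.2]
      have heg' : min ⌊(p' α i).toReal / h⌋₊ M = min ⌊(p' β i).toReal / h⌋₊ M := by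
        have := congrArg Fin.val heg
        simpa [hegrid] using this
      have hreal : (p' α i).toReal ≤ (p' β i).toReal + h :=
        hcellR _ _ ENNReal.toReal_nonneg
          (by
            rw [← ENNReal.toReal_one]
            exact ENNReal.toReal_mono one_ne_top (hp'le α (hGw0 α hαG) i))
          ENNReal.toReal_nonneg
          (by
            rw [← ENNReal.toReal_one]
            exact ENNReal.toReal_mono one_ne_top (hp'le β (hGw0 β hβG) i))
          heg'
      calc p' α i = ENNReal.ofReal (p' α i).toReal := (ENNReal.ofReal_toReal hαne).symm
        _ ≤ ENNReal.ofReal ((p' β i).toReal + h) := ENNReal.ofReal_le_ofReal hreal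
        _ = ENNReal.ofReal (p' β i).toReal + ENNReal.ofReal h := by
            rw [ENNReal.ofReal_add ENNReal.toReal_nonneg hhpos.le]
        _ = p' β i + ENNReal.ofReal h := by rw [ENNReal.ofReal_toReal hβne]
  -- representatives and couplings
  have hΩne : Nonempty Ω := by
    rcases isEmpty_or_nonempty Ω with hE | hN
    · exfalso
      have h1 : lam Set.univ = 1 := measure_univ
      rw [Set.univ_eq_empty_iff.2 hE, measure_empty] at h1
      exact zero_ne_one h1
    · exact hN
  have hrepex : ∀ k, ∃ β : Ω, (A k).Nonempty → β ∈ A k := fun k => by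
    rcases Set.eq_empty_or_nonempty (A k) with hk | hk
    · exact ⟨Classical.arbitrary Ω, fun hne => absurd hne (by simp [hk])⟩
    · exact ⟨hk.choose, fun _ => hk.choose_spec⟩
  choose rep hrepmem using hrepex
  have hrepG : ∀ k, (A k).Nonempty → rep k ∈ G := fun k hk => (hrepmem k hk).1
  have hrepcoup : ∀ k, ∃ γb : Measure (X × X), (A k).Nonempty →
      Measure.map Prod.fst γb = nb (rep k) ∧ Measure.map Prod.snd γb = σ ∧
        ∫⁻ q, geoCost q.1 q.2 ∂γb < ENNReal.ofReal (2 * ε) := by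
    intro k
    by_cases hk : (A k).Nonempty
    · have hrk : ENNReal.ofReal ε ≤ w (rep k) := hrepG k hk
      have hW : Wcost geoCost (nb (rep k)) σ < ENNReal.ofReal (2 * ε) :=
        lt_of_le_of_lt (hnbrad _ hrk)
          (ENNReal.ofReal_lt_ofReal_iff (by linarith) |>.2 (by linarith))
      obtain ⟨γb, h1, h2, h3⟩ := exists_coupling_of_lt _ hW
      exact ⟨γb, fun _ => ⟨h1, h2, h3⟩⟩
    · exact ⟨0, fun hne => absurd hne hk⟩
  choose Γpre hΓpre using hrepcoup
  set Γ : (Fin N → Fin (M+1)) → Measure (X × X) :=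
    fun k => if hk : (A k).Nonempty then Γpre k else 0 with hΓdef
  have hΓ : ∀ k, (A k).Nonempty →
      Measure.map Prod.fst (Γ k) = nb (rep k) ∧ Measure.map Prod.snd (Γ k) = σ ∧
        ∫⁻ q, geoCost q.1 q.2 ∂(Γ k) < ENNReal.ofReal (2 * ε) := fun k hk => by
    simp only [hΓdef, dif_pos hk]
    exact hΓpre k hk
  have hΓzero : ∀ k, ¬(A k).Nonempty → Γ k = 0 := fun k hk => by
    simp only [hΓdef, dif_neg hk]
  -- per-cell data
  set pβ : (Fin N → Fin (M+1)) → Fin N → ℝ≥0∞ := fun k i => nb (rep k) (P i) with hpβ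
  set η : (Fin N → Fin (M+1)) → Fin N → Measure X := fun k i =>
    Measure.map Prod.snd ((Γ k).restrict (P i ×ˢ Set.univ)) with hη
  set coef : (Fin N → Fin (M+1)) → Fin N → Ω → ℝ≥0∞ := fun k i α =>
    w α * min (p' α i) (pβ k i) * (p' α i)⁻¹ * (pβ k i)⁻¹ with hcoef
  set ζ : (Fin N → Fin (M+1)) → Fin N → Ω → Measure X := fun k i α =>
    ((A k).indicator (coef k i) α) • ((nb α).restrict (P i)) with hζ
  have hcoefm : ∀ k i, Measurable (coef k i) := fun k i =>
    ((hw.mul ((hp'meas i).min measurable_const)).mul (hp'meas i).inv).mul measurable_const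
  have hζm : ∀ k i, Measurable (ζ k i) := fun k i =>
    Measure.measurable_measure.2 fun s hs => by
      simp only [hζ, Measure.smul_apply, smul_eq_mul, Measure.restrict_apply hs]
      exact ((hcoefm k i).indicator (hAmeas k)).mul (hnbev (hs.inter (hPmeas i)))
  set Z : (Fin N → Fin (M+1)) → Fin N → Measure X := fun k i => lam.bind (ζ k i) with hZ
  have hZapp : ∀ k i E, MeasurableSet E →
      Z k i E = ∫⁻ α in A k, coef k i α * nb α (E ∩ P i) ∂lam := by
    intro k i E hE
    rw [hZ, Measure.bind_apply hE (hζm k i).aemeasurable]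
    have heq : ∀ α, ζ k i α E
        = (A k).indicator (fun α => coef k i α * nb α (E ∩ P i)) α := by
      intro α
      by_cases hα : α ∈ A k <;>
        simp [hζ, Measure.smul_apply, smul_eq_mul, Measure.restrict_apply hE,
          Set.indicator_of_mem, Set.indicator_of_notMem, hα]
    simp_rw [heq]
    rw [lintegral_indicator (hAmeas k)]
  set t : (Fin N → Fin (M+1)) → ℝ≥0∞ := fun k => ∫⁻ α in A k, w α ∂lam with ht
  have htsum : ∑ k, t k = ∫⁻ α in G, w α ∂lam := by
    conv_rhs => rw [hAcov]
    rw [lintegral_iUnion hAmeas (fun k l hkl => hAdisj k l hkl) w, tsum_fintype]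
  have hwint1 : ∀ s : Set Ω, ∫⁻ α in s, w α ∂lam ≤ 1 := by
    intro s
    calc ∫⁻ α in s, w α ∂lam ≤ ∫⁻ α, w α ∂lam := lintegral_mono' Measure.restrict_le_self le_rfl
      _ ≤ ∫⁻ _, 1 ∂lam := lintegral_mono hw1
      _ = 1 := by rw [lintegral_one, measure_univ]
  have htG1 : ∫⁻ α in G, w α ∂lam ≤ 1 := hwint1 G
  have ht1 : ∀ k, t k ≤ 1 := fun k => hwint1 (A k)
  have hcoefp' : ∀ k i α, α ∈ A k → coef k i α * p' α i ≤ w α := by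
    intro k i α _
    calc coef k i α * p' α i
        = w α * ((min (p' α i) (pβ k i) * (pβ k i)⁻¹) * ((p' α i)⁻¹ * p' α i)) := by
          rw [hcoef]; ring
      _ ≤ w α * (1 * 1) := by
          refine mul_le_mul' le_rfl (mul_le_mul' ?_ (enn_inv_mul_le_one _))
          exact le_trans (mul_le_mul' (min_le_right _ _) le_rfl) (enn_mul_inv_le_one _)
      _ = w α := by simp
  have hZuniv : ∀ k i, Z k i Set.univ ≤ t k := by
    intro k i
    rw [hZapp k i _ MeasurableSet.univ, Set.univ_inter, ht]
    refine setLIntegral_mono hw ?_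
    intro α hα
    exact hcoefp' k i α hα
  -- couplings
  set γgood : Measure (X × X) := ∑ k, ∑ i, (Z k i).prod (η k i) with hγgood
  have hZzero : ∀ k, ¬(A k).Nonempty → ∀ i E, MeasurableSet E → Z k i E = 0 := by
    intro k hk i E hE
    rw [hZapp k i E hE, Set.not_nonempty_iff_eq_empty.1 hk, Measure.restrict_empty,
      lintegral_zero_measure]
  have hfinZ : ∀ k i, IsFiniteMeasure (Z k i) := fun k i =>
    ⟨lt_of_le_of_lt (le_trans (hZuniv k i) (ht1 k)) one_lt_top⟩
  have hΓuniv : ∀ k, Γ k Set.univ ≤ 1 := by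
    intro k
    by_cases hk : (A k).Nonempty
    · have h1 := (hΓ k hk).1
      have : Γ k Set.univ = nb (rep k) Set.univ := by
        rw [← h1, Measure.map_apply measurable_fst MeasurableSet.univ, Set.preimage_univ]
      rw [this, hnbuniv _ (hGw0 _ (hrepG k hk))]
    · rw [hΓzero k hk]; simp
  have hηle : ∀ k i (E : Set X), MeasurableSet E →
      η k i E = Γ k (Prod.snd ⁻¹' E ∩ (P i ×ˢ Set.univ)) := by
    intro k i E hEm
    rw [hη, Measure.map_apply measurable_snd hEm,
      Measure.restrict_apply (measurable_snd hEm)]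
  have hfinη : ∀ k i, IsFiniteMeasure (η k i) := by
    intro k i
    constructor
    calc η k i Set.univ = Γ k (Prod.snd ⁻¹' Set.univ ∩ (P i ×ˢ Set.univ)) :=
          hηle k i _ MeasurableSet.univ
      _ ≤ Γ k Set.univ := measure_mono (Set.inter_subset_right.trans (Set.subset_univ _))
      _ ≤ 1 := hΓuniv k
      _ < ⊤ := one_lt_top
  have hgx : ∀ x : X, Measurable fun y => geoCost x y := by
    intro x
    unfold geoCost
    exact ENNReal.measurable_ofReal.comp (Real.continuous_arccos.comp
      (continuous_const.inner continuous_id)).measurable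
  have hηlint : ∀ k i (g : X → ℝ≥0∞), Measurable g →
      ∫⁻ y, g y ∂(η k i) = ∫⁻ q, g q.2 ∂((Γ k).restrict (P i ×ˢ Set.univ)) := by
    intro k i g hg
    rw [hη]
    exact lintegral_map hg measurable_snd
  have hηuniv : ∀ k i, (A k).Nonempty → η k i Set.univ = pβ k i := by
    intro k i hk
    rw [hη]
    rw [Measure.map_apply measurable_snd MeasurableSet.univ, Set.preimage_univ,
      Measure.restrict_apply MeasurableSet.univ, Set.univ_inter, Set.prod_univ,
      ← Measure.map_apply measurable_fst (hPmeas i), (hΓ k hk).1, hpβ]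
  -- the good-part marginals
  set ρG : Measure X := (lam.restrict G).bind ρker with hρG
  set ρB : Measure X := (lam.restrict Gᶜ).bind ρker with hρB
  have hρGapp : ∀ E : Set X, MeasurableSet E → ρG E = ∫⁻ α in G, w α * nb α E ∂lam := by
    intro E hE
    rw [hρG, Measure.bind_apply hE hρm.aemeasurable]
    simp only [hρker, Measure.smul_apply, smul_eq_mul]
  have hρBapp : ∀ E : Set X, MeasurableSet E → ρB E = ∫⁻ α in Gᶜ, w α * nb α E ∂lam := by
    intro E hE
    rw [hρB, Measure.bind_apply hE hρm.aemeasurable]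
    simp only [hρker, Measure.smul_apply, smul_eq_mul]
  set tG : ℝ≥0∞ := ∫⁻ α in G, w α ∂lam with htG
  set tB : ℝ≥0∞ := ∫⁻ α in Gᶜ, w α ∂lam with htB
  have hwnb : ∀ α, w α * nb α Set.univ = w α := by
    intro α
    rcases eq_or_ne (w α) 0 with h0 | h0
    · simp [h0]
    · rw [hnbuniv α h0, mul_one]
  have hρGuniv : ρG Set.univ = tG := by
    rw [hρGapp _ MeasurableSet.univ, htG]
    exact setLIntegral_congr_fun hGmeas (fun α _ => hwnb α)
  have hρBuniv : ρB Set.univ = tB := by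
    rw [hρBapp _ MeasurableSet.univ, htB]
    exact setLIntegral_congr_fun hGmeas.compl (fun α _ => hwnb α)
  have htB1 : tB ≤ 1 := hwint1 Gᶜ
  haveI hfinρG : IsFiniteMeasure ρG :=
    ⟨by rw [hρGuniv]; exact lt_of_le_of_lt htG1 one_lt_top⟩
  haveI hfinρB : IsFiniteMeasure ρB :=
    ⟨by rw [hρBuniv]; exact lt_of_le_of_lt htB1 one_lt_top⟩
  set F : Measure X := Measure.map Prod.fst γgood with hF
  set Gm : Measure X := Measure.map Prod.snd γgood with hGm
  have hsumapp : ∀ (E : Set (X × X)), MeasurableSet E →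
      γgood E = ∑ k, ∑ i, (Z k i).prod (η k i) E := by
    intro E hE
    rw [hγgood]
    rw [Measure.finset_sum_apply]
    exact Finset.sum_congr rfl fun k _ => Measure.finset_sum_apply _ _ _
  have hFapp : ∀ E : Set X, MeasurableSet E →
      F E = ∑ k, ∑ i, Z k i E * η k i Set.univ := by
    intro E hE
    rw [hF, Measure.map_apply measurable_fst hE, hsumapp _ (measurable_fst hE)]
    refine Finset.sum_congr rfl fun k _ => Finset.sum_congr rfl fun i _ => ?_
    haveI := hfinZ k i
    haveI := hfinη k i
    rw [← Set.prod_univ, Measure.prod_prod]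
  have hGmapp : ∀ E : Set X, MeasurableSet E →
      Gm E = ∑ k, ∑ i, Z k i Set.univ * η k i E := by
    intro E hE
    rw [hGm, Measure.map_apply measurable_snd hE, hsumapp _ (measurable_snd hE)]
    refine Finset.sum_congr rfl fun k _ => Finset.sum_congr rfl fun i _ => ?_
    haveI := hfinZ k i
    haveI := hfinη k i
    rw [← Set.univ_prod, Measure.prod_prod]
  have hFle : F ≤ ρG := by
    rw [Measure.le_iff]
    intro E hE
    rw [hFapp E hE, hρGapp E hE]
    have hstep : ∀ k, ∑ i, Z k i E * η k i Set.univ ≤ ∫⁻ α in A k, w α * nb α E ∂lam := by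
      intro k
      by_cases hk : (A k).Nonempty
      · have hfinpβ : ∀ i, pβ k i ≠ ⊤ := fun i =>
          ((hp'le _ (hGw0 _ (hrepG k hk)) i).trans_lt one_lt_top).ne
        have hterm : ∀ i, Z k i E * η k i Set.univ
            = ∫⁻ α in A k, coef k i α * nb α (E ∩ P i) * pβ k i ∂lam := by
          intro i
          rw [hηuniv k i hk, hZapp k i E hE, ← lintegral_mul_const' (pβ k i) _ (hfinpβ i)]
        simp_rw [hterm]
        rw [← lintegral_finset_sum]
        swap
        · exact fun i _ => ((hcoefm k i).mul (hnbev (hE.inter (hPmeas i)))).mul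
            measurable_const
        refine setLIntegral_mono (hw.mul (hnbev hE)) ?_
        intro α hα
        calc ∑ i, coef k i α * nb α (E ∩ P i) * pβ k i
            ≤ ∑ i, w α * nb α (E ∩ P i) := by
              refine Finset.sum_le_sum fun i _ => ?_
              calc coef k i α * nb α (E ∩ P i) * pβ k i
                  = w α * nb α (E ∩ P i) * ((min (p' α i) (pβ k i) * (p' α i)⁻¹)
                      * ((pβ k i)⁻¹ * pβ k i)) := by rw [hcoef]; ring
                _ ≤ w α * nb α (E ∩ P i) * (1 * 1) := by
                    refine mul_le_mul' le_rfl (mul_le_mul' ?_ (enn_inv_mul_le_one _))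
                    exact le_trans (mul_le_mul' (min_le_left _ _) le_rfl)
                      (enn_mul_inv_le_one _)
                _ = w α * nb α (E ∩ P i) := by simp
          _ = w α * ∑ i, nb α (E ∩ P i) := by rw [Finset.mul_sum]
          _ ≤ w α * nb α E := by
              refine mul_le_mul' le_rfl ?_
              have hdis : Pairwise (Function.onFun Disjoint (fun i => E ∩ P i)) :=
                fun i j hij => (hPdisj i j hij).mono Set.inter_subset_right
                  Set.inter_subset_right
              rw [← tsum_fintype (L := SummationFilter.unconditional _), ← measure_iUnion hdis (fun i => hE.inter (hPmeas i))]
              exact measure_mono (Set.iUnion_subset fun i => Set.inter_subset_left)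
      · have hz : ∀ i, Z k i E = 0 := fun i => hZzero k hk i E hE
        simp [hz]
    calc ∑ k, ∑ i, Z k i E * η k i Set.univ ≤ ∑ k, ∫⁻ α in A k, w α * nb α E ∂lam :=
          Finset.sum_le_sum fun k _ => hstep k
      _ = ∫⁻ α in G, w α * nb α E ∂lam := by
          conv_rhs => rw [hAcov]
          rw [lintegral_iUnion hAmeas (fun k l hkl => hAdisj k l hkl), tsum_fintype]
  have hGmle : Gm ≤ tG • σ := by
    rw [Measure.le_iff]
    intro E hE
    rw [hGmapp E hE, Measure.smul_apply, smul_eq_mul]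
    have hstep : ∀ k, ∑ i, Z k i Set.univ * η k i E ≤ t k * σ E := by
      intro k
      by_cases hk : (A k).Nonempty
      · have hηsum : ∑ i, η k i E ≤ σ E := by
          have heq : ∀ i, η k i E = Γ k (Prod.snd ⁻¹' E ∩ (P i ×ˢ Set.univ)) :=
            fun i => hηle k i E hE
          simp_rw [heq]
          have hdis : Pairwise (Function.onFun Disjoint
              (fun i => Prod.snd ⁻¹' E ∩ (P i ×ˢ Set.univ))) := by
            intro i j hij
            refine Set.disjoint_left.2 ?_
            rintro q ⟨-, hq1⟩ ⟨-, hq2⟩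
            exact Set.disjoint_left.1 (hPdisj i j hij) hq1.1 hq2.1
          rw [← tsum_fintype (L := SummationFilter.unconditional _), ← measure_iUnion hdis (fun i =>
            ((measurable_snd hE).inter ((hPmeas i).prod MeasurableSet.univ)))]
          have hsnd : Γ k (Prod.snd ⁻¹' E) = σ E := by
            rw [← (hΓ k hk).2.1, Measure.map_apply measurable_snd hE]
          rw [← hsnd]
          exact measure_mono (Set.iUnion_subset fun i => Set.inter_subset_left)
        calc ∑ i, Z k i Set.univ * η k i E ≤ ∑ i, t k * η k i E :=
              Finset.sum_le_sum fun i _ => mul_le_mul' (hZuniv k i) le_rfl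
          _ = t k * ∑ i, η k i E := by rw [Finset.mul_sum]
          _ ≤ t k * σ E := mul_le_mul' le_rfl hηsum
      · have hz : ∀ i, Z k i Set.univ = 0 := fun i => hZzero k hk i _ MeasurableSet.univ
        simp [hz]
    calc ∑ k, ∑ i, Z k i Set.univ * η k i E ≤ ∑ k, t k * σ E :=
          Finset.sum_le_sum fun k _ => hstep k
      _ = (∑ k, t k) * σ E := by rw [Finset.sum_mul]
      _ = tG * σ E := by rw [htsum]
  haveI hfinF : IsFiniteMeasure F :=
    ⟨lt_of_le_of_lt (le_trans (Measure.le_iff'.1 hFle Set.univ) (le_of_eq hρGuniv))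
      (lt_of_le_of_lt htG1 one_lt_top)⟩
  haveI hfinGm : IsFiniteMeasure Gm := by
    constructor
    have hσuniv : σ Set.univ = 1 := measure_univ
    calc Gm Set.univ ≤ (tG • σ) Set.univ := Measure.le_iff'.1 hGmle Set.univ
      _ = tG := by rw [Measure.smul_apply, smul_eq_mul, hσuniv, mul_one]
      _ < ⊤ := lt_of_le_of_lt htG1 one_lt_top
  set D1 : Measure X := ρG - F with hD1
  set D2 : Measure X := tG • σ - Gm with hD2
  have hD1add : F + D1 = ρG := by
    rw [hD1, add_comm]
    exact Measure.sub_add_cancel_of_le hFle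
  have hD2add : Gm + D2 = tG • σ := by
    rw [hD2, add_comm]
    exact Measure.sub_add_cancel_of_le hGmle
  have hFunivGm : F Set.univ = Gm Set.univ := by
    rw [hFapp _ MeasurableSet.univ, hGmapp _ MeasurableSet.univ]
  have hmasseq : D1 Set.univ = D2 Set.univ := by
    rw [hD1, hD2, Measure.sub_apply MeasurableSet.univ hFle,
      Measure.sub_apply MeasurableSet.univ hGmle, hρGuniv, hFunivGm,
      Measure.smul_apply, smul_eq_mul, (measure_univ : σ Set.univ = 1), mul_one]
  have hNh : (N : ℝ≥0∞) * ENNReal.ofReal h = ENNReal.ofReal ε := by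
    rw [← ENNReal.ofReal_natCast N, ← ENNReal.ofReal_mul (Nat.cast_nonneg N)]
    congr 1
    rw [hh]
    field_simp
  have hD1univ : D1 Set.univ ≤ ENNReal.ofReal ε := by
    rw [hD1, Measure.sub_apply MeasurableSet.univ hFle, hρGuniv, tsub_le_iff_right]
    have hkey : ∀ k, t k ≤ (∑ i, Z k i Set.univ * η k i Set.univ)
        + ENNReal.ofReal ε * t k := by
      intro k
      by_cases hk : (A k).Nonempty
      · have hrepGk := hrepG k hk
        have hfinpβ : ∀ i, pβ k i ≠ ⊤ := fun i =>
          ((hp'le _ (hGw0 _ hrepGk) i).trans_lt one_lt_top).ne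
        have hterm : ∀ i, Z k i Set.univ * η k i Set.univ
            = ∫⁻ α in A k, w α * min (p' α i) (pβ k i) ∂lam := by
          intro i
          rw [hηuniv k i hk, hZapp k i _ MeasurableSet.univ, Set.univ_inter,
            ← lintegral_mul_const' (pβ k i) _ (hfinpβ i)]
          refine setLIntegral_congr_fun (hAmeas k) ?_
          intro α hα
          have hαG : α ∈ G := hα.1
          have hp'top : p' α i ≠ ⊤ := ((hp'le α (hGw0 α hαG) i).trans_lt one_lt_top).ne
          rcases eq_or_ne (p' α i) 0 with h0 | h0
          · simp [hcoef, h0]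
          rcases eq_or_ne (pβ k i) 0 with hb0 | hb0
          · simp [hcoef, hb0]
          calc coef k i α * p' α i * pβ k i
              = w α * min (p' α i) (pβ k i) * (((p' α i)⁻¹ * p' α i)
                  * ((pβ k i)⁻¹ * pβ k i)) := by rw [hcoef]; ring
            _ = w α * min (p' α i) (pβ k i) := by
                rw [ENNReal.inv_mul_cancel h0 hp'top,
                  ENNReal.inv_mul_cancel hb0 (hfinpβ i), one_mul, mul_one]
        have hsummin : ∑ i, Z k i Set.univ * η k i Set.univ
            = ∫⁻ α in A k, w α * ∑ i, min (p' α i) (pβ k i) ∂lam := by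
          simp_rw [hterm]
          rw [← lintegral_finset_sum]
          · simp_rw [Finset.mul_sum]
          · exact fun i _ => hw.mul ((hp'meas i).min measurable_const)
        rw [hsummin, ht]
        have hc1 : ENNReal.ofReal ε * ∫⁻ α in A k, w α ∂lam
            = ∫⁻ α in A k, ENNReal.ofReal ε * w α ∂lam := by
          rw [lintegral_const_mul' _ _ ENNReal.ofReal_ne_top]
        rw [hc1, ← lintegral_add_left (f := fun α => w α * ∑ i, min (p' α i) (pβ k i)) (hw.mul (Finset.measurable_sum _
          (fun i _ => (hp'meas i).min measurable_const)))]
        refine setLIntegral_mono (by fun_prop) ?_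
        intro α hα
        have hαG : α ∈ G := hα.1
        calc w α = w α * ∑ i, p' α i := by rw [hsum1 α hαG, mul_one]
          _ ≤ w α * ∑ i, (min (p' α i) (pβ k i) + ENNReal.ofReal h) := by
              refine mul_le_mul' le_rfl (Finset.sum_le_sum fun i _ => ?_)
              exact hcell k α hα (rep k) (hrepmem k hk) i
          _ = w α * ∑ i, min (p' α i) (pβ k i)
              + w α * ((N : ℝ≥0∞) * ENNReal.ofReal h) := by
              rw [Finset.sum_add_distrib, mul_add, Finset.sum_const,
                Finset.card_univ, Fintype.card_fin, nsmul_eq_mul]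
          _ ≤ w α * ∑ i, min (p' α i) (pβ k i) + ENNReal.ofReal ε * w α := by
              rw [hNh]
              exact add_le_add le_rfl (by rw [mul_comm])
      · have hAe : A k = ∅ := Set.not_nonempty_iff_eq_empty.1 hk
        have hz : t k = 0 := by
          rw [ht]
          simp only [hAe, Measure.restrict_empty, lintegral_zero_measure]
        simp [hz]
    calc tG = ∑ k, t k := (htsum.trans htG.symm).symm
      _ ≤ ∑ k, ((∑ i, Z k i Set.univ * η k i Set.univ) + ENNReal.ofReal ε * t k) :=
          Finset.sum_le_sum fun k _ => hkey k
      _ = F Set.univ + ENNReal.ofReal ε * ∑ k, t k := by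
          rw [Finset.sum_add_distrib, ← Finset.mul_sum, hFapp _ MeasurableSet.univ]
      _ ≤ F Set.univ + ENNReal.ofReal ε * 1 := by
          refine add_le_add le_rfl (mul_le_mul' le_rfl ?_)
          rw [htsum]
          exact htG1
      _ = ENNReal.ofReal ε + F Set.univ := by rw [mul_one, add_comm]
  haveI hfinD1 : IsFiniteMeasure D1 :=
    ⟨lt_of_le_of_lt hD1univ ENNReal.ofReal_lt_top⟩
  haveI hfinD2 : IsFiniteMeasure D2 := by
    constructor
    rw [← hmasseq]
    exact lt_of_le_of_lt hD1univ ENNReal.ofReal_lt_top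
  set γslop : Measure (X × X) := (D1 Set.univ)⁻¹ • (D1.prod D2) with hγslop
  set γbad : Measure (X × X) := ρB.prod σ with hγbad
  have hσuniv : σ Set.univ = 1 := measure_univ
  have hD1top : D1 Set.univ ≠ ⊤ := (lt_of_le_of_lt hD1univ ENNReal.ofReal_lt_top).ne
  have hslopfst : Measure.map Prod.fst γslop = D1 := by
    apply Measure.ext
    intro E hE
    rw [hγslop, Measure.map_apply measurable_fst hE, Measure.smul_apply, smul_eq_mul,
      ← Set.prod_univ, Measure.prod_prod, ← hmasseq]
    rcases eq_or_ne (D1 Set.univ) 0 with h0 | h0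
    · have hD1E : D1 E = 0 :=
        le_antisymm (le_trans (measure_mono (Set.subset_univ E)) h0.le) (zero_le ..)
      simp [h0, hD1E]
    · rw [mul_comm (D1 E), ← mul_assoc, ENNReal.inv_mul_cancel h0 hD1top, one_mul]
  have hslopsnd : Measure.map Prod.snd γslop = D2 := by
    apply Measure.ext
    intro E hE
    rw [hγslop, Measure.map_apply measurable_snd hE, Measure.smul_apply, smul_eq_mul,
      ← Set.univ_prod, Measure.prod_prod, hmasseq]
    rcases eq_or_ne (D2 Set.univ) 0 with h0 | h0
    · have hD2E : D2 E = 0 :=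
        le_antisymm (le_trans (measure_mono (Set.subset_univ E)) h0.le) (zero_le ..)
      simp [h0, hD2E]
    · rw [← mul_assoc, ENNReal.inv_mul_cancel h0 (hmasseq ▸ hD1top), one_mul]
  have hbadfst : Measure.map Prod.fst γbad = ρB := by
    apply Measure.ext
    intro E hE
    rw [hγbad, Measure.map_apply measurable_fst hE, ← Set.prod_univ, Measure.prod_prod,
      hσuniv, mul_one]
  have hbadsnd : Measure.map Prod.snd γbad = tB • σ := by
    apply Measure.ext
    intro E hE
    rw [hγbad, Measure.map_apply measurable_snd hE, ← Set.univ_prod, Measure.prod_prod,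
      hρBuniv, Measure.smul_apply, smul_eq_mul]
  -- cost bounds
  have hσc : σ (Metric.sphere (0 : EuclideanSpace ℝ (Fin d)) 1)ᶜ = 0 := by
    rw [measure_compl Metric.isClosed_sphere.measurableSet (by rw [hσs]; exact one_ne_top),
      hσs, measure_univ, tsub_self]
  have h2ε : ENNReal.ofReal ε + ENNReal.ofReal ε = ENNReal.ofReal (2 * ε) := by
    rw [← ENNReal.ofReal_add hε0.le hε0.le]
    congr 1
    ring
  have h4ε : ENNReal.ofReal (2 * ε) + ENNReal.ofReal (2 * ε) = ENNReal.ofReal (4 * ε) := by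
    rw [← ENNReal.ofReal_add (by positivity) (by positivity)]
    congr 1
    ring
  have hcostgood : ∫⁻ q, geoCost q.1 q.2 ∂γgood ≤ ENNReal.ofReal (4 * ε) := by
    have hcellbound : ∀ k, ∑ i, ∫⁻ q, geoCost q.1 q.2 ∂((Z k i).prod (η k i))
        ≤ t k * ENNReal.ofReal (4 * ε) := by
      intro k
      by_cases hk : (A k).Nonempty
      · -- main case
        set C : Fin N → ℝ≥0∞ :=
          fun i => ∫⁻ q in P i ×ˢ Set.univ, geoCost q.1 q.2 ∂(Γ k) with hC
        have hkG := hrepG k hk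
        have hmassP : ∀ i, Γ k (P i ×ˢ Set.univ) = pβ k i := by
          intro i
          rw [Set.prod_univ, ← Measure.map_apply measurable_fst (hPmeas i), (hΓ k hk).1]
        have haesph : ∀ᵐ q ∂(Γ k),
            q.1 ∈ Metric.sphere (0 : EuclideanSpace ℝ (Fin d)) 1 ∧
            q.2 ∈ Metric.sphere (0 : EuclideanSpace ℝ (Fin d)) 1 := by
          rw [ae_iff]
          have h1 : Γ k (Prod.fst ⁻¹' (Metric.sphere (0 : EuclideanSpace ℝ (Fin d)) 1)ᶜ) = 0 := by
            rw [← Measure.map_apply measurable_fst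
              Metric.isClosed_sphere.measurableSet.compl, (hΓ k hk).1]
            exact hnbs _
          have h2 : Γ k (Prod.snd ⁻¹' (Metric.sphere (0 : EuclideanSpace ℝ (Fin d)) 1)ᶜ) = 0 := by
            rw [← Measure.map_apply measurable_snd
              Metric.isClosed_sphere.measurableSet.compl, (hΓ k hk).2.1]
            exact hσc
          refine measure_mono_null (fun q hq => ?_) (measure_union_null h1 h2)
          simp only [Set.mem_setOf_eq, not_and_or] at hq
          rcases hq with hq | hq
          · exact Or.inl hq
          · exact Or.inr hq
        have hinnerb : ∀ i, ∀ x ∈ P i ∩ Metric.sphere (0 : EuclideanSpace ℝ (Fin d)) 1,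
            ∫⁻ y, geoCost x y ∂(η k i) ≤ C i + ENNReal.ofReal (2 * ε) * pβ k i := by
          intro i x hx
          have hx1 : ‖x‖ = 1 := mem_sphere_zero_iff_norm.1 hx.2
          rw [hηlint k i _ (hgx x)]
          have hae1 : ∀ᵐ q ∂((Γ k).restrict (P i ×ˢ Set.univ)), q ∈ P i ×ˢ Set.univ :=
            ae_restrict_mem ((hPmeas i).prod MeasurableSet.univ)
          have hae2 := ae_restrict_of_ae (s := P i ×ˢ Set.univ) haesph
          have hbound : ∀ᵐ q ∂((Γ k).restrict (P i ×ˢ Set.univ)),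
              geoCost x q.2 ≤ geoCost q.1 q.2 + ENNReal.ofReal (2 * ε) := by
            filter_upwards [hae1, hae2] with q hq1 hq2
            have hq11 : ‖q.1‖ = 1 := mem_sphere_zero_iff_norm.1 hq2.1
            have hq21 : ‖q.2‖ = 1 := mem_sphere_zero_iff_norm.1 hq2.2
            have hc1 : ‖ctr i‖ = 1 := hctr1 i
            have t1 : geoCost x q.2 ≤ geoCost x q.1 + geoCost q.1 q.2 :=
              geoCost_triangle hx1 hq11 hq21
            have t2 : geoCost x q.1 ≤ geoCost x (ctr i) + geoCost (ctr i) q.1 :=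
              geoCost_triangle hx1 hc1 hq11
            have e1 : geoCost x (ctr i) ≤ ENNReal.ofReal ε := by
              rw [geoCost_comm]
              exact ENNReal.ofReal_le_ofReal (hPrad i x hx.1)
            have e2 : geoCost (ctr i) q.1 ≤ ENNReal.ofReal ε :=
              ENNReal.ofReal_le_ofReal (hPrad i q.1 hq1.1)
            calc geoCost x q.2 ≤ geoCost x q.1 + geoCost q.1 q.2 := t1
              _ ≤ (geoCost x (ctr i) + geoCost (ctr i) q.1) + geoCost q.1 q.2 :=
                  add_le_add t2 le_rfl
              _ ≤ (ENNReal.ofReal ε + ENNReal.ofReal ε) + geoCost q.1 q.2 :=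
                  add_le_add (add_le_add e1 e2) le_rfl
              _ = geoCost q.1 q.2 + ENNReal.ofReal (2 * ε) := by rw [h2ε, add_comm]
          calc ∫⁻ q, geoCost x q.2 ∂((Γ k).restrict (P i ×ˢ Set.univ))
              ≤ ∫⁻ q, (geoCost q.1 q.2 + ENNReal.ofReal (2 * ε))
                  ∂((Γ k).restrict (P i ×ˢ Set.univ)) := lintegral_mono_ae hbound
            _ = C i + ENNReal.ofReal (2 * ε) * pβ k i := by
                rw [lintegral_add_right _ measurable_const, lintegral_const,
                  Measure.restrict_apply_univ, hmassP i, hC]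
        have hZae : ∀ i, ∀ᵐ x ∂(Z k i),
            x ∈ P i ∩ Metric.sphere (0 : EuclideanSpace ℝ (Fin d)) 1 := by
          intro i
          rw [ae_iff]
          have h1 : Z k i ((P i)ᶜ) = 0 := by
            rw [hZapp k i _ (hPmeas i).compl]
            have he : (P i)ᶜ ∩ P i = ∅ := Set.compl_inter_self _
            simp [he]
          have h2 : Z k i ((Metric.sphere (0 : EuclideanSpace ℝ (Fin d)) 1)ᶜ) = 0 := by
            rw [hZapp k i _ Metric.isClosed_sphere.measurableSet.compl]
            have hz : ∀ α, nb α ((Metric.sphere (0 : EuclideanSpace ℝ (Fin d)) 1)ᶜ ∩ P i) = 0 :=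
              fun α => le_antisymm
                (le_trans (measure_mono Set.inter_subset_left) (hnbs α).le) (zero_le ..)
            simp [hz]
          refine measure_mono_null (fun x hx => ?_) (measure_union_null h1 h2)
          simp only [Set.mem_setOf_eq, Set.mem_inter_iff, not_and_or] at hx
          rcases hx with hx | hx
          · exact Or.inl hx
          · exact Or.inr hx
        have hcost_i : ∀ i, ∫⁻ q, geoCost q.1 q.2 ∂((Z k i).prod (η k i))
            ≤ (C i + ENNReal.ofReal (2 * ε) * pβ k i) * t k := by
          intro i
          haveI := hfinZ k i
          haveI := hfinη k i
          rw [lintegral_prod _ measurable_geoCost.aemeasurable]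
          calc ∫⁻ x, ∫⁻ y, geoCost x y ∂(η k i) ∂(Z k i)
              ≤ ∫⁻ _, (C i + ENNReal.ofReal (2 * ε) * pβ k i) ∂(Z k i) := by
                refine lintegral_mono_ae ?_
                filter_upwards [hZae i] with x hx
                exact hinnerb i x hx
            _ = (C i + ENNReal.ofReal (2 * ε) * pβ k i) * Z k i Set.univ :=
                lintegral_const _
            _ ≤ (C i + ENNReal.ofReal (2 * ε) * pβ k i) * t k :=
                mul_le_mul' le_rfl (hZuniv k i)
        have hsumC : ∑ i, C i ≤ ENNReal.ofReal (2 * ε) := by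
          have hdis : Pairwise (Function.onFun Disjoint (fun i => P i ×ˢ (Set.univ : Set X))) := by
            intro i j hij
            refine Set.disjoint_left.2 ?_
            rintro q hq1 hq2
            exact Set.disjoint_left.1 (hPdisj i j hij) hq1.1 hq2.1
          have : ∑ i, C i = ∫⁻ q in ⋃ i, P i ×ˢ (Set.univ : Set X), geoCost q.1 q.2 ∂(Γ k) := by
            rw [lintegral_iUnion (fun i => (hPmeas i).prod MeasurableSet.univ) hdis,
              tsum_fintype]
          rw [this]
          calc ∫⁻ q in ⋃ i, P i ×ˢ (Set.univ : Set X), geoCost q.1 q.2 ∂(Γ k)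
              ≤ ∫⁻ q, geoCost q.1 q.2 ∂(Γ k) := lintegral_mono' Measure.restrict_le_self le_rfl
            _ ≤ ENNReal.ofReal (2 * ε) := (hΓ k hk).2.2.le
        have hsumpβ : ∑ i, pβ k i ≤ 1 := by
          rw [hpβ]
          rw [hsumU (rep k)]
          rw [← hnbuniv (rep k) (hGw0 _ hkG)]
          exact measure_mono (Set.subset_univ _)
        calc ∑ i, ∫⁻ q, geoCost q.1 q.2 ∂((Z k i).prod (η k i))
            ≤ ∑ i, (C i + ENNReal.ofReal (2 * ε) * pβ k i) * t k :=
              Finset.sum_le_sum fun i _ => hcost_i i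
          _ = (∑ i, (C i + ENNReal.ofReal (2 * ε) * pβ k i)) * t k := by
              rw [Finset.sum_mul]
          _ ≤ ENNReal.ofReal (4 * ε) * t k := by
              refine mul_le_mul' ?_ le_rfl
              calc ∑ i, (C i + ENNReal.ofReal (2 * ε) * pβ k i)
                  = (∑ i, C i) + ENNReal.ofReal (2 * ε) * ∑ i, pβ k i := by
                    rw [Finset.sum_add_distrib, Finset.mul_sum]
                _ ≤ ENNReal.ofReal (2 * ε) + ENNReal.ofReal (2 * ε) * 1 :=
                    add_le_add hsumC (mul_le_mul' le_rfl hsumpβ)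
                _ = ENNReal.ofReal (4 * ε) := by rw [mul_one, h4ε]
          _ = t k * ENNReal.ofReal (4 * ε) := mul_comm _ _
      · -- empty cell
        have hz : ∀ i, ∫⁻ q, geoCost q.1 q.2 ∂((Z k i).prod (η k i)) = 0 := by
          intro i
          haveI := hfinη k i
          have hZ0 : Z k i = 0 :=
            Measure.measure_univ_eq_zero.1 (hZzero k hk i _ MeasurableSet.univ)
          rw [hZ0, Measure.zero_prod, lintegral_zero_measure]
        simp [hz]
    rw [hγgood, lintegral_finset_sum_measure]
    calc ∑ k, ∫⁻ q, geoCost q.1 q.2 ∂(∑ i, (Z k i).prod (η k i))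
        = ∑ k, ∑ i, ∫⁻ q, geoCost q.1 q.2 ∂((Z k i).prod (η k i)) :=
          Finset.sum_congr rfl fun k _ => by rw [lintegral_finset_sum_measure]
      _ ≤ ∑ k, t k * ENNReal.ofReal (4 * ε) := Finset.sum_le_sum fun k _ => hcellbound k
      _ = (∑ k, t k) * ENNReal.ofReal (4 * ε) := by rw [Finset.sum_mul]
      _ ≤ 1 * ENNReal.ofReal (4 * ε) := by
          refine mul_le_mul' ?_ le_rfl
          rw [htsum]
          exact htG1
      _ = ENNReal.ofReal (4 * ε) := one_mul _
  have hcostslop : ∫⁻ q, geoCost q.1 q.2 ∂γslop ≤ ENNReal.ofReal (Real.pi * ε) := by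
    rw [hγslop, lintegral_smul_measure]
    calc (D1 Set.univ)⁻¹ * ∫⁻ q, geoCost q.1 q.2 ∂(D1.prod D2)
        ≤ (D1 Set.univ)⁻¹ * (ENNReal.ofReal Real.pi * (D1 Set.univ * D2 Set.univ)) := by
          refine mul_le_mul' le_rfl ?_
          calc ∫⁻ q, geoCost q.1 q.2 ∂(D1.prod D2)
              ≤ ∫⁻ _, ENNReal.ofReal Real.pi ∂(D1.prod D2) :=
                lintegral_mono fun q => geoCost_le_pi _ _
            _ = ENNReal.ofReal Real.pi * (D1.prod D2) Set.univ := lintegral_const _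
            _ = ENNReal.ofReal Real.pi * (D1 Set.univ * D2 Set.univ) := by
                rw [← Set.univ_prod_univ, Measure.prod_prod]
      _ = ENNReal.ofReal Real.pi * D2 Set.univ * ((D1 Set.univ)⁻¹ * D1 Set.univ) := by
          ring
      _ ≤ ENNReal.ofReal Real.pi * D2 Set.univ * 1 :=
          mul_le_mul' le_rfl (enn_inv_mul_le_one _)
      _ = ENNReal.ofReal Real.pi * D1 Set.univ := by rw [mul_one, ← hmasseq]
      _ ≤ ENNReal.ofReal Real.pi * ENNReal.ofReal ε := mul_le_mul' le_rfl hD1univ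
      _ = ENNReal.ofReal (Real.pi * ε) := (ENNReal.ofReal_mul Real.pi_pos.le).symm
  have htBε : tB ≤ ENNReal.ofReal ε := by
    rw [htB]
    calc ∫⁻ α in Gᶜ, w α ∂lam ≤ ∫⁻ _ in Gᶜ, ENNReal.ofReal ε ∂lam := by
          refine setLIntegral_mono measurable_const ?_
          intro α hα
          exact le_of_not_ge hα
      _ = ENNReal.ofReal ε * lam Gᶜ := by rw [setLIntegral_const]
      _ ≤ ENNReal.ofReal ε * 1 := mul_le_mul' le_rfl prob_le_one
      _ = ENNReal.ofReal ε := mul_one _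
  have hcostbad : ∫⁻ q, geoCost q.1 q.2 ∂γbad ≤ ENNReal.ofReal (Real.pi * ε) := by
    rw [hγbad]
    calc ∫⁻ q, geoCost q.1 q.2 ∂(ρB.prod σ)
        ≤ ∫⁻ _, ENNReal.ofReal Real.pi ∂(ρB.prod σ) :=
          lintegral_mono fun q => geoCost_le_pi _ _
      _ = ENNReal.ofReal Real.pi * (ρB.prod σ) Set.univ := lintegral_const _
      _ = ENNReal.ofReal Real.pi * (tB * 1) := by
          rw [← Set.univ_prod_univ, Measure.prod_prod, hρBuniv, hσuniv]
      _ ≤ ENNReal.ofReal Real.pi * ENNReal.ofReal ε := by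
          rw [mul_one]
          exact mul_le_mul' le_rfl htBε
      _ = ENNReal.ofReal (Real.pi * ε) := (ENNReal.ofReal_mul Real.pi_pos.le).symm
  -- assemble
  refine ⟨γgood + γslop + γbad, ?_, ?_, ?_⟩
  · have hfst : Measure.map Prod.fst (γgood + γslop + γbad) = F + D1 + ρB := by
      rw [Measure.map_add _ _ measurable_fst, Measure.map_add _ _ measurable_fst,
        hslopfst, hbadfst]
    rw [hfst, hD1add]
    apply Measure.ext
    intro E hE
    rw [Measure.add_apply, hρGapp E hE, hρBapp E hE, Measure.bind_apply hE hρm.aemeasurable]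
    simp only [hρker, Measure.smul_apply, smul_eq_mul]
    exact lintegral_add_compl (fun α => w α * nb α E) hGmeas
  · have hsnd : Measure.map Prod.snd (γgood + γslop + γbad) = Gm + D2 + tB • σ := by
      rw [Measure.map_add _ _ measurable_snd, Measure.map_add _ _ measurable_snd,
        hslopsnd, hbadsnd]
    rw [hsnd, hD2add]
    rw [← add_smul]
    congr 1
    rw [htG, htB]
    exact lintegral_add_compl w hGmeas
  · rw [lintegral_add_measure, lintegral_add_measure]
    calc ∫⁻ q, geoCost q.1 q.2 ∂γgood + ∫⁻ q, geoCost q.1 q.2 ∂γslop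
        + ∫⁻ q, geoCost q.1 q.2 ∂γbad
        ≤ ENNReal.ofReal (4 * ε) + ENNReal.ofReal (Real.pi * ε)
          + ENNReal.ofReal (Real.pi * ε) := by
          exact add_le_add (add_le_add hcostgood hcostslop) hcostbad
      _ = ENNReal.ofReal ((4 + 2 * Real.pi) * ε) := by
          rw [← ENNReal.ofReal_add (by positivity) (by positivity),
            ← ENNReal.ofReal_add (by positivity) (by positivity)]
          congr 1
          ring

end AuxDecl

/-- A mixture of ε-radial probability measures is 4√ε-radial. -/
theorem stmt6 {d : ℕ} (hd : 1 ≤ d) (ε : ℝ) (hε0 : 0 < ε) (hε : ε < 1/2)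
    (σ : Measure (EuclideanSpace ℝ (Fin d))) (hσ : IsUniformSphere σ)
    {Ω : Type*} [MeasurableSpace Ω] (lam : Measure Ω) [IsProbabilityMeasure lam]
    (m : Ω → Measure (EuclideanSpace ℝ (Fin d)))
    (hmprob : ∀ α, IsProbabilityMeasure (m α))
    (hmeas : ∀ s : Set (EuclideanSpace ℝ (Fin d)), MeasurableSet s →
      Measurable fun α => m α s)
    (hrad : ∀ α, IsRadial σ ε (m α)) :
    IsRadial σ (4 * Real.sqrt ε) (lam.bind m) := by
  intro J hJc hJpos hJmass
  classical
  obtain ⟨hσp, hσs, -⟩ := hσ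
  haveI := hσp
  have hSmeas : MeasurableSet (shell d J) :=
    show MeasurableSet ((fun x : EuclideanSpace ℝ (Fin d) => ‖x‖) ⁻¹' J) from
      measurable_norm hJc.measurableSet
  have hmm : Measurable m := Measure.measurable_measure.2 (fun s hs => hmeas s hs)
  set S : Set (EuclideanSpace ℝ (Fin d)) := shell d J with hS
  set w : Ω → ℝ≥0∞ := fun α => m α S with hwdef
  have hw : Measurable w := hmeas S hSmeas
  have hw1 : ∀ α, w α ≤ 1 := fun α => by
    haveI := hmprob α
    exact prob_le_one
  have hwtop : ∀ α, w α ≠ ⊤ := fun α => ((hw1 α).trans_lt one_lt_top).ne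
  have hrm : Measurable (rproj (d := d)) := by
    unfold rproj
    exact (measurable_norm.inv).smul measurable_id
  have hrs : ∀ x : EuclideanSpace ℝ (Fin d), x ∈ S →
      rproj x ∈ Metric.sphere (0 : EuclideanSpace ℝ (Fin d)) 1 := by
    intro x hx
    have hxpos : 0 < ‖x‖ := hJpos hx
    rw [mem_sphere_zero_iff_norm]
    unfold rproj
    rw [norm_smul, norm_inv, norm_norm]
    exact inv_mul_cancel₀ hxpos.ne'
  set nb : Ω → Measure (EuclideanSpace ℝ (Fin d)) :=
    fun α => Measure.map rproj (condOn (m α) S) with hnbdef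
  have hnbapp : ∀ α (E : Set (EuclideanSpace ℝ (Fin d))), MeasurableSet E →
      nb α E = (w α)⁻¹ * m α (rproj ⁻¹' E ∩ S) := by
    intro α E hE
    rw [hnbdef]
    unfold condOn
    rw [Measure.map_apply hrm hE, Measure.smul_apply, smul_eq_mul,
      Measure.restrict_apply (hrm hE)]
  have hnbm : Measurable nb := Measure.measurable_measure.2 fun E hE => by
    have : (fun α => nb α E) = fun α => (w α)⁻¹ * m α (rproj ⁻¹' E ∩ S) := by
      funext α
      exact hnbapp α E hE
    rw [this]
    exact hw.inv.mul (hmeas _ ((hrm hE).inter hSmeas))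
  have hnb1 : ∀ α, w α ≠ 0 → IsProbabilityMeasure (nb α) := by
    intro α hα
    constructor
    rw [hnbapp α _ MeasurableSet.univ, Set.preimage_univ, Set.univ_inter]
    exact ENNReal.inv_mul_cancel hα (hwtop α)
  have hnbs : ∀ α, nb α (Metric.sphere (0 : EuclideanSpace ℝ (Fin d)) 1)ᶜ = 0 := by
    intro α
    rw [hnbapp α _ Metric.isClosed_sphere.measurableSet.compl]
    have hempty : rproj ⁻¹' (Metric.sphere (0 : EuclideanSpace ℝ (Fin d)) 1)ᶜ ∩ S = ∅ := by
      ext x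
      simp only [Set.mem_inter_iff, Set.mem_preimage, Set.mem_compl_iff,
        Set.mem_empty_iff_false, iff_false, not_and]
      intro hx hxS
      exact hx (hrs x hxS)
    rw [hempty, measure_empty, mul_zero]
  have hnbrad : ∀ α, ENNReal.ofReal ε ≤ w α → Wcost geoCost (nb α) σ ≤ ENNReal.ofReal ε :=
    fun α hα => hrad α J hJc hJpos hα
  obtain ⟨γ, hγ1, hγ2, hγ3⟩ := mixture_coupling hd hε0 σ hσp hσs lam w hw hw1 nb hnbm
    hnb1 hnbs hnbrad
  -- the total mass of the shell
  have hc : (lam.bind m) S = ∫⁻ α, w α ∂lam := Measure.bind_apply hSmeas hmm.aemeasurable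
  set c : ℝ≥0∞ := (lam.bind m) S with hcdef
  have hcge : ENNReal.ofReal (4 * Real.sqrt ε) ≤ c := hJmass
  have hc1 : c ≤ 1 := by
    rw [hc]
    calc ∫⁻ α, w α ∂lam ≤ ∫⁻ _, 1 ∂lam := lintegral_mono hw1
      _ = 1 := by rw [lintegral_one, measure_univ]
  have hctop : c ≠ ⊤ := (hc1.trans_lt one_lt_top).ne
  have hc0 : c ≠ 0 := by
    refine (lt_of_lt_of_le (ENNReal.ofReal_pos.2 ?_) hcge).ne'
    positivity
  -- identify the first marginal
  have hwnbm : Measurable (fun α => w α • nb α) := Measure.measurable_measure.2 fun E hE => by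
    simp only [Measure.smul_apply, smul_eq_mul]
    exact hw.mul ((Measure.measurable_coe hE).comp hnbm)
  have hident : lam.bind (fun α => w α • nb α)
      = Measure.map rproj ((lam.bind m).restrict S) := by
    apply Measure.ext
    intro E hE
    rw [Measure.bind_apply hE hwnbm.aemeasurable, Measure.map_apply hrm hE,
      Measure.restrict_apply (hrm hE), Measure.bind_apply ((hrm hE).inter hSmeas)
      hmm.aemeasurable]
    apply lintegral_congr
    intro α
    rcases eq_or_ne (w α) 0 with h0 | h0
    · have : m α (rproj ⁻¹' E ∩ S) = 0 :=
        le_antisymm (le_trans (measure_mono Set.inter_subset_right) h0.le) (zero_le ..)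
      simp [h0, this]
    · rw [Measure.smul_apply, smul_eq_mul, hnbapp α E hE, ← mul_assoc,
        ENNReal.mul_inv_cancel h0 (hwtop α), one_mul]
  show Wcost geoCost (Measure.map rproj (condOn (lam.bind m) S)) σ
      ≤ ENNReal.ofReal (4 * Real.sqrt ε)
  have hcondOn : Measure.map rproj (condOn (lam.bind m) S)
      = c⁻¹ • Measure.map rproj ((lam.bind m).restrict S) := by
    unfold condOn
    exact my_map_smul _ _ hrm
  have hmarg1 : Measure.map Prod.fst (c⁻¹ • γ)
      = Measure.map rproj (condOn (lam.bind m) S) := by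
    rw [my_map_smul _ _ measurable_fst, hγ1, hident, hcondOn]
  have hmarg2 : Measure.map Prod.snd (c⁻¹ • γ) = σ := by
    rw [my_map_smul _ _ measurable_snd, hγ2, smul_smul, ← hc,
      ENNReal.inv_mul_cancel hc0 hctop, one_smul]
  refine le_trans (wcost_le_cost geoCost hmarg1 hmarg2) ?_
  rw [lintegral_smul_measure]
  set a : ℝ≥0∞ := ENNReal.ofReal (4 * Real.sqrt ε) with hadef
  have hXa : ENNReal.ofReal ((4 + 2 * Real.pi) * ε) ≤ a * a := by
    rw [hadef, ← ENNReal.ofReal_mul (by positivity)]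
    apply ENNReal.ofReal_le_ofReal
    have hsq : Real.sqrt ε * Real.sqrt ε = ε := Real.mul_self_sqrt hε0.le
    have hπ : Real.pi ≤ 4 := Real.pi_le_four
    nlinarith [hε0.le]
  calc c⁻¹ * ∫⁻ p, geoCost p.1 p.2 ∂γ
      ≤ a⁻¹ * (a * a) := by
        refine mul_le_mul' (ENNReal.inv_le_inv.2 hcge) (le_trans hγ3 hXa)
    _ = (a⁻¹ * a) * a := by ring
    _ ≤ 1 * a := mul_le_mul' (enn_inv_mul_le_one a) le_rfl
    _ = a := one_mul _
end
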